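/- arXiv:1810.04062 — 9 statements merged into one kernel-verified Lean document; each statement's English description precedes it below -/
import Mathlib

section
/- Let H and K be complex Hilbert spaces, M and N closed subspaces of H, and A, B : H → K bounded linear operators. There exists a bounded linear operator C : H → K such that C x = A x for all x ∈ M and C x = B x for all x ∈ N if and only if the range of A* − B* is contained in the (algebraic) sum M^⊥ + N^⊥. -/
open ContinuousLinearMap Filter Topology
open scoped ComplexInnerProductSpace

/-- Auxiliary: if `A' y - B' y` always lies in `U ⊔ V` with `U, V` closed, there is a bounded
`D` with `A' y - D y ∈ U` and `B' y - D y ∈ V` for all `y`. -/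
theorem aux_exists_mid {H K : Type*} [NormedAddCommGroup H] [InnerProductSpace ℂ H]
    [CompleteSpace H] [NormedAddCommGroup K] [InnerProductSpace ℂ K] [CompleteSpace K]
    (U V : Submodule ℂ H) (hU : IsClosed (U : Set H)) (hV : IsClosed (V : Set H))
    (A' B' : K →L[ℂ] H) (h : ∀ y, A' y - B' y ∈ U ⊔ V) :
    ∃ D : K →L[ℂ] H, ∀ y, A' y - D y ∈ U ∧ B' y - D y ∈ V := by
  set W := U ⊓ V with hW
  haveI : CompleteSpace W := by
    have hcl : IsClosed (W : Set H) := by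
      rw [hW, Submodule.coe_inf]; exact hU.inter hV
    exact hcl.completeSpace_coe
  haveI : CompleteSpace Wᗮ := W.isClosed_orthogonal.completeSpace_coe
  -- choose a decomposition
  have hdec : ∀ y, ∃ mm ∈ U, ∃ nn ∈ V, mm + nn = A' y - B' y := fun y =>
    Submodule.mem_sup.mp (h y)
  choose m hm n hn hmn using hdec
  set P := Wᗮ.orthogonalProjectionOnto with hP
  set g : K → H := fun y => (P (A' y - m y) : H) with hg
  -- the three defining properties of g
  have hWU : W ≤ U := inf_le_left
  have hWV : W ≤ V := inf_le_right
  have hgW : ∀ y, g y ∈ Wᗮ := fun y => (P (A' y - m y)).2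
  have hkey : ∀ y, (A' y - m y) - g y ∈ W := by
    intro y
    have := Submodule.sub_starProjection_mem_orthogonal (K := Wᗮ) (A' y - m y)
    rwa [Submodule.orthogonal_orthogonal] at this
  have hg₁ : ∀ y, A' y - g y ∈ U := by
    intro y
    have heq : A' y - g y = ((A' y - m y) - g y) + m y := by abel
    rw [heq]
    exact U.add_mem (hWU (hkey y)) (hm y)
  have hg₂ : ∀ y, B' y - g y ∈ V := by
    intro y
    have h1 : B' y - (A' y - m y) = -(n y) := by
      have h2 := hmn y
      rw [show B' y - (A' y - m y) = -(A' y - B' y) + m y from by abel, ← h2]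
      abel
    have heq : B' y - g y = (B' y - (A' y - m y)) + ((A' y - m y) - g y) := by abel
    rw [heq, h1]
    exact V.add_mem (V.neg_mem (hn y)) (hWV (hkey y))
  -- uniqueness of an element with these three properties
  have uniq : ∀ y (z₁ z₂ : H), A' y - z₁ ∈ U → B' y - z₁ ∈ V → z₁ ∈ Wᗮ →
      A' y - z₂ ∈ U → B' y - z₂ ∈ V → z₂ ∈ Wᗮ → z₁ = z₂ := by
    intro y z₁ z₂ h1U h1V h1W h2U h2V h2W
    have hdU : z₂ - z₁ ∈ U := by
      have heq : z₂ - z₁ = (A' y - z₁) - (A' y - z₂) := by abel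
      rw [heq]; exact U.sub_mem h1U h2U
    have hdV : z₂ - z₁ ∈ V := by
      have heq : z₂ - z₁ = (B' y - z₁) - (B' y - z₂) := by abel
      rw [heq]; exact V.sub_mem h1V h2V
    have hdW : z₂ - z₁ ∈ W := ⟨hdU, hdV⟩
    have hdWo : z₂ - z₁ ∈ Wᗮ := Wᗮ.sub_mem h2W h1W
    have hz : z₂ - z₁ = 0 :=
      (Submodule.disjoint_def.mp (Submodule.orthogonal_disjoint W)) _ hdW hdWo
    exact (sub_eq_zero.mp hz).symm
  -- g is linear
  have hadd : ∀ y y', g (y + y') = g y + g y' := by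
    intro y y'
    refine uniq (y + y') _ _ (hg₁ _) (hg₂ _) (hgW _) ?_ ?_ (Wᗮ.add_mem (hgW y) (hgW y'))
    · have heq : A' (y + y') - (g y + g y') = (A' y - g y) + (A' y' - g y') := by
        rw [map_add]; abel
      rw [heq]; exact U.add_mem (hg₁ y) (hg₁ y')
    · have heq : B' (y + y') - (g y + g y') = (B' y - g y) + (B' y' - g y') := by
        rw [map_add]; abel
      rw [heq]; exact V.add_mem (hg₂ y) (hg₂ y')
  have hsmul : ∀ (c : ℂ) y, g (c • y) = c • g y := by
    intro c y
    refine uniq (c • y) _ _ (hg₁ _) (hg₂ _) (hgW _) ?_ ?_ (Wᗮ.smul_mem c (hgW y))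
    · have heq : A' (c • y) - c • g y = c • (A' y - g y) := by
        rw [map_smul, smul_sub]
      rw [heq]; exact U.smul_mem c (hg₁ y)
    · have heq : B' (c • y) - c • g y = c • (B' y - g y) := by
        rw [map_smul, smul_sub]
      rw [heq]; exact V.smul_mem c (hg₂ y)
  set Dlin : K →ₗ[ℂ] H :=
    { toFun := g, map_add' := hadd, map_smul' := hsmul } with hDlin
  -- continuity via the closed graph theorem
  have hcont : Continuous Dlin := by
    apply LinearMap.continuous_of_seq_closed_graph
    intro u x z hu hgu
    have hgu' : Tendsto (fun k => g (u k)) atTop (𝓝 z) := hgu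
    refine uniq x z (g x) ?_ ?_ ?_ (hg₁ x) (hg₂ x) (hgW x)
    · refine hU.mem_of_tendsto (((A'.continuous.tendsto x).comp hu).sub hgu') ?_
      exact Eventually.of_forall fun k => hg₁ (u k)
    · refine hV.mem_of_tendsto (((B'.continuous.tendsto x).comp hu).sub hgu') ?_
      exact Eventually.of_forall fun k => hg₂ (u k)
    · exact W.isClosed_orthogonal.mem_of_tendsto hgu'
        (Eventually.of_forall fun k => hgW (u k))
  exact ⟨⟨Dlin, hcont⟩, fun y => ⟨hg₁ y, hg₂ y⟩⟩

theorem stmt_0 {H K : Type*} [NormedAddCommGroup H] [InnerProductSpace ℂ H] [CompleteSpace H]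
    [NormedAddCommGroup K] [InnerProductSpace ℂ K] [CompleteSpace K]
    (M N : Submodule ℂ H) (hM : IsClosed (M : Set H)) (hN : IsClosed (N : Set H))
    (A B : H →L[ℂ] K) :
    (∃ C : H →L[ℂ] K, (∀ x ∈ M, C x = A x) ∧ (∀ x ∈ N, C x = B x)) ↔
      LinearMap.range ((ContinuousLinearMap.adjoint A - ContinuousLinearMap.adjoint B : K →L[ℂ] H) : K →ₗ[ℂ] H) ≤
        Mᗮ ⊔ Nᗮ := by
  constructor
  · rintro ⟨C, hCM, hCN⟩ z hz
    obtain ⟨y, rfl⟩ := hz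
    refine Submodule.mem_sup.mpr ⟨(adjoint A - adjoint C) y, ?_, (adjoint C - adjoint B) y, ?_, by simp⟩
    · rw [Submodule.mem_orthogonal]
      intro u hu
      rw [ContinuousLinearMap.sub_apply, inner_sub_right, adjoint_inner_right,
        adjoint_inner_right, hCM u hu, sub_self]
    · rw [Submodule.mem_orthogonal]
      intro u hu
      rw [ContinuousLinearMap.sub_apply, inner_sub_right, adjoint_inner_right,
        adjoint_inner_right, hCN u hu, sub_self]
  · intro h
    obtain ⟨D, hD⟩ := aux_exists_mid Mᗮ Nᗮ M.isClosed_orthogonal N.isClosed_orthogonal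
      (adjoint A) (adjoint B) (fun y => h ⟨y, by simp⟩)
    refine ⟨adjoint D, ?_, ?_⟩
    · intro x hx
      refine ext_inner_right ℂ fun y => ?_
      rw [adjoint_inner_left]
      have h0 : (inner ℂ x ((adjoint A) y - D y) : ℂ) = 0 :=
        (Submodule.mem_orthogonal _ _).mp (hD y).1 x hx
      rw [inner_sub_right] at h0
      rw [← adjoint_inner_right A]
      linear_combination -h0
    · intro x hx
      refine ext_inner_right ℂ fun y => ?_
      rw [adjoint_inner_left]
      have h0 : (inner ℂ x ((adjoint B) y - D y) : ℂ) = 0 :=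
        (Submodule.mem_orthogonal _ _).mp (hD y).2 x hx
      rw [inner_sub_right] at h0
      rw [← adjoint_inner_right B]
      linear_combination -h0
end

section
/- Let H and K be complex Hilbert spaces, M and N closed subspaces of H, and A, B : H → K bounded linear operators. There exists a closed partially defined linear operator C from H to K (i.e., an unbounded operator whose graph is a closed subspace of H × K) whose domain contains M + N and which satisfies C x = A x for all x ∈ M and C x = B x for all x ∈ N, if and only if the preimage (A* − B*)⁻¹(M^⊥ + N^⊥) is dense in K. -/
set_option maxHeartbeats 1000000
set_option linter.unusedSectionVars false

open ContinuousLinearMap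

noncomputable section Stmt1Aux

variable {H K : Type*} [NormedAddCommGroup H] [InnerProductSpace ℂ H] [CompleteSpace H]
  [NormedAddCommGroup K] [InnerProductSpace ℂ K] [CompleteSpace K]

/-- The inclusion `H × K →ₗ WithLp 2 (H × K)`. -/
private def stmt1Iota : (H × K) ≃ₗ[ℂ] WithLp 2 (H × K) :=
  (WithLp.linearEquiv 2 ℂ (H × K)).symm

private def stmt1Gmap (A : H →L[ℂ] K) : H →ₗ[ℂ] WithLp 2 (H × K) :=
  (stmt1Iota).toLinearMap.comp (LinearMap.prod LinearMap.id A.toLinearMap)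

private lemma stmt1_fst (A : H →L[ℂ] K) (x : H) : (stmt1Gmap A x).fst = x := rfl
private lemma stmt1_snd (A : H →L[ℂ] K) (x : H) : (stmt1Gmap A x).snd = A x := rfl

private lemma stmt1_inner (A : H →L[ℂ] K) (x : H) (w : WithLp 2 (H × K)) :
    inner (𝕜 := ℂ) (stmt1Gmap A x) w = inner (𝕜 := ℂ) x (w.fst + adjoint A w.snd) := by
  rw [WithLp.prod_inner_apply]
  change inner ℂ x w.fst + inner ℂ (A x) w.snd = _
  rw [inner_add_right, adjoint_inner_right]

private lemma stmt1_mem_orth (A : H →L[ℂ] K) (M : Submodule ℂ H) (w : WithLp 2 (H × K)) :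
    w ∈ (M.map (stmt1Gmap A))ᗮ ↔ w.fst + adjoint A w.snd ∈ Mᗮ := by
  simp only [Submodule.mem_orthogonal, Submodule.mem_map, forall_exists_index, and_imp]
  constructor
  · intro h x hx
    rw [← stmt1_inner A x w]
    exact h _ x hx rfl
  · rintro h v x hx rfl
    rw [stmt1_inner A x w]
    exact h x hx

end Stmt1Aux

theorem stmt_1 {H K : Type*} [NormedAddCommGroup H] [InnerProductSpace ℂ H] [CompleteSpace H]
    [NormedAddCommGroup K] [InnerProductSpace ℂ K] [CompleteSpace K]
    (M N : Submodule ℂ H) (hM : IsClosed (M : Set H)) (hN : IsClosed (N : Set H))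
    (A B : H →L[ℂ] K) :
    (∃ (D : Submodule ℂ H) (C : D →ₗ[ℂ] K),
        IsClosed (Set.range fun d : D => ((d : H), C d)) ∧
        M ⊔ N ≤ D ∧
        (∀ d : D, (d : H) ∈ M → C d = A (d : H)) ∧
        (∀ d : D, (d : H) ∈ N → C d = B (d : H))) ↔
      Dense {k : K |
        (ContinuousLinearMap.adjoint A - ContinuousLinearMap.adjoint B) k ∈ Mᗮ ⊔ Nᗮ} := by
  classical
  set e : WithLp 2 (H × K) ≃L[ℂ] H × K := WithLp.prodContinuousLinearEquiv 2 ℂ H K with he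
  set ι : (H × K) ≃ₗ[ℂ] WithLp 2 (H × K) := stmt1Iota with hι
  set G : Submodule ℂ (WithLp 2 (H × K)) := M.map (stmt1Gmap A) ⊔ N.map (stmt1Gmap B) with hG
  set V : Submodule ℂ K :=
    (Mᗮ ⊔ Nᗮ).comap (ContinuousLinearMap.adjoint A
      - ContinuousLinearMap.adjoint B).toLinearMap with hV
  have hVset : {k : K |
      (ContinuousLinearMap.adjoint A - ContinuousLinearMap.adjoint B) k ∈ Mᗮ ⊔ Nᗮ}
        = (V : Set K) := rfl
  -- orthogonal complement of `G`
  have hGorth : ∀ w : WithLp 2 (H × K), w ∈ Gᗮ ↔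
      (w.fst + adjoint A w.snd ∈ Mᗮ ∧ w.fst + adjoint B w.snd ∈ Nᗮ) := by
    intro w
    rw [hG, ← Submodule.inf_orthogonal, Submodule.mem_inf, stmt1_mem_orth, stmt1_mem_orth]
  -- second coordinates of `Gᗮ` are exactly `V`
  have hsnd : ∀ w : WithLp 2 (H × K), w ∈ Gᗮ → w.snd ∈ V := by
    intro w hw
    rw [hGorth] at hw
    have : (adjoint A - adjoint B) w.snd
        = (w.fst + adjoint A w.snd) - (w.fst + adjoint B w.snd) := by
      simp only [ContinuousLinearMap.sub_apply]; abel
    have hmem : (adjoint A - adjoint B) w.snd ∈ Mᗮ ⊔ Nᗮ := by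
      rw [this]
      exact sub_mem (Submodule.mem_sup_left hw.1) (Submodule.mem_sup_right hw.2)
    exact hmem
  have hproj : ∀ v : K, v ∈ V → ∃ u : H, ι (u, v) ∈ Gᗮ := by
    intro v hv
    have hv' : (adjoint A - adjoint B) v ∈ Mᗮ ⊔ Nᗮ := hv
    obtain ⟨m, hm, n, hn, hmn⟩ := Submodule.mem_sup.1 hv'
    refine ⟨m - adjoint A v, ?_⟩
    rw [hGorth]
    constructor
    · have : (ι (m - adjoint A v, v)).fst + adjoint A ((ι (m - adjoint A v, v)).snd)
        = m := by show (m - adjoint A v) + adjoint A v = m; abel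
      rw [this]; exact hm
    · have : (ι (m - adjoint A v, v)).fst + adjoint B ((ι (m - adjoint A v, v)).snd)
        = -n := by
        show (m - adjoint A v) + adjoint B v = -n
        rw [ContinuousLinearMap.sub_apply] at hmn
        have h4 : m - adjoint A v + adjoint B v
            = m - (adjoint A v - adjoint B v) := by abel
        rw [h4, ← hmn]
        abel
      rw [this]; exact neg_mem hn
  constructor
  · rintro ⟨D, C, hclosed, hMN, hCA, hCB⟩
    -- the graph of C, as a closed submodule of the product
    set Gr₀ : Submodule ℂ (H × K) := LinearMap.range (D.subtype.prod C) with hGr₀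
    have hGr₀set : (Gr₀ : Set (H × K)) = Set.range fun d : D => ((d : H), C d) := by
      ext x; simp [hGr₀, LinearMap.mem_range, LinearMap.prod_apply]
    have hGr₀closed : IsClosed (Gr₀ : Set (H × K)) := hGr₀set ▸ hclosed
    set Gr : Submodule ℂ (WithLp 2 (H × K)) := Gr₀.comap (e.toLinearEquiv : WithLp 2 (H × K) →ₗ[ℂ] H × K) with hGr
    have hGrset : (Gr : Set (WithLp 2 (H × K))) = ⇑e ⁻¹' (Gr₀ : Set (H × K)) := rfl
    have hGrclosed : IsClosed (Gr : Set (WithLp 2 (H × K))) :=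
      hGrset ▸ hGr₀closed.preimage e.continuous
    have hGGr : G ≤ Gr := by
      rw [hG]
      refine sup_le ?_ ?_
      · rintro w ⟨x, hx, rfl⟩
        have hxD : x ∈ D := hMN (Submodule.mem_sup_left hx)
        refine ⟨⟨x, hxD⟩, ?_⟩
        have := hCA ⟨x, hxD⟩ hx
        show ((x : H), C ⟨x, hxD⟩) = e (stmt1Gmap A x)
        rw [this]; rfl
      · rintro w ⟨x, hx, rfl⟩
        have hxD : x ∈ D := hMN (Submodule.mem_sup_right hx)
        refine ⟨⟨x, hxD⟩, ?_⟩
        have := hCB ⟨x, hxD⟩ hx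
        show ((x : H), C ⟨x, hxD⟩) = e (stmt1Gmap B x)
        rw [this]; rfl
    rw [hVset, Submodule.dense_iff_topologicalClosure_eq_top,
      Submodule.topologicalClosure_eq_top_iff]
    rw [Submodule.eq_bot_iff]
    intro k hk
    have hkey : ι (0, k) ∈ Gᗮᗮ := by
      intro w hw
      have h2 : inner (𝕜 := ℂ) w (ι (0, k)) = inner (𝕜 := ℂ) w.snd k := by
        rw [WithLp.prod_inner_apply]
        show inner (𝕜 := ℂ) w.fst (0 : H) + inner (𝕜 := ℂ) w.snd k = _
        rw [inner_zero_right, zero_add]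
      rw [h2]
      exact hk _ (hsnd w hw)
    rw [Submodule.orthogonal_orthogonal_eq_closure] at hkey
    have hle : G.topologicalClosure ≤ Gr :=
      Submodule.topologicalClosure_minimal G hGGr hGrclosed
    have : ι (0, k) ∈ Gr := hle hkey
    obtain ⟨d, hd⟩ := this
    have hfst : (d : H) = 0 := congrArg Prod.fst hd
    have hd0 : d = 0 := Subtype.ext hfst
    have : C d = k := congrArg Prod.snd hd
    rw [hd0, map_zero] at this
    exact this.symm
  · intro hdense
    rw [hVset] at hdense
    have hVorth : Vᗮ = ⊥ := by
      rw [← Submodule.topologicalClosure_eq_top_iff,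
        ← Submodule.dense_iff_topologicalClosure_eq_top]
      exact hdense
    set Gc : Submodule ℂ (WithLp 2 (H × K)) := G.topologicalClosure with hGc
    set Gc₀ : Submodule ℂ (H × K) := Gc.comap (ι : (H × K) →ₗ[ℂ] WithLp 2 (H × K)) with hGc₀
    have hmemGc₀ : ∀ x : H × K, x ∈ Gc₀ ↔ ι x ∈ Gc := fun _ => Iff.rfl
    have hGc₀closed : IsClosed (Gc₀ : Set (H × K)) := by
      have : (Gc₀ : Set (H × K)) = ⇑e.symm ⁻¹' (Gc : Set (WithLp 2 (H × K))) := rfl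
      rw [this, hGc]
      exact (G.isClosed_topologicalClosure).preimage e.symm.continuous
    -- the graph condition
    have hgraph : ∀ k : K, ((0 : H), k) ∈ Gc₀ → k = 0 := by
      intro k hk
      rw [hmemGc₀, hGc, ← Submodule.orthogonal_orthogonal_eq_closure] at hk
      have : k ∈ Vᗮ := by
        intro v hv
        obtain ⟨u, hu⟩ := hproj v hv
        have := hk _ hu
        have h2 : inner (𝕜 := ℂ) (ι (u, v)) (ι ((0 : H), k)) = inner (𝕜 := ℂ) v k := by
          rw [WithLp.prod_inner_apply]
          show inner (𝕜 := ℂ) u (0 : H) + inner (𝕜 := ℂ) v k = _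
          rw [inner_zero_right, zero_add]
        rw [h2] at this
        exact this
      rw [hVorth] at this
      exact this
    -- fst is injective on Gc₀
    set π : Gc₀ →ₗ[ℂ] H := (LinearMap.fst ℂ H K).comp Gc₀.subtype with hπ
    have hπinj : Function.Injective π := by
      rw [← LinearMap.ker_eq_bot, Submodule.eq_bot_iff]
      rintro ⟨⟨x, k⟩, hg⟩ hker
      have hx : x = 0 := hker
      subst hx
      have hk0 : k = 0 := hgraph k hg
      subst hk0
      rfl
    set D : Submodule ℂ H := LinearMap.range π with hD
    set eqv : Gc₀ ≃ₗ[ℂ] D := LinearEquiv.ofInjective π hπinj with heqv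
    set C : D →ₗ[ℂ] K :=
      (LinearMap.snd ℂ H K).comp (Gc₀.subtype.comp eqv.symm.toLinearMap) with hC
    have hkey : ∀ d : D, (((d : H), C d) : H × K) = ((eqv.symm d : Gc₀) : H × K) := by
      intro d
      have h1 : ((eqv.symm d : Gc₀) : H × K).snd = C d := rfl
      have h2 : ((eqv.symm d : Gc₀) : H × K).fst = (d : H) := by
        conv_rhs => rw [← eqv.apply_symm_apply d]
        rw [heqv]
        rw [LinearEquiv.ofInjective_apply]
        rfl
      rw [← h1, ← h2]
    have hmem : ∀ d : D, (((d : H), C d) : H × K) ∈ Gc₀ := by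
      intro d; rw [hkey]; exact (eqv.symm d).2
    have huniq : ∀ (x : H) (k : K) (hg : (x, k) ∈ Gc₀) (hx : x ∈ D), C ⟨x, hx⟩ = k := by
      intro x k hg hx
      have h1 : ((x, C ⟨x, hx⟩) : H × K) ∈ Gc₀ := hmem ⟨x, hx⟩
      have h2 : (((0 : H), C ⟨x, hx⟩ - k) : H × K) ∈ Gc₀ := by
        have := Gc₀.sub_mem h1 hg
        simpa using this
      have := hgraph _ h2
      exact sub_eq_zero.mp this
    refine ⟨D, C, ?_, ?_, ?_, ?_⟩
    · have hr : (Set.range fun d : D => ((d : H), C d)) = (Gc₀ : Set (H × K)) := by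
        ext x
        constructor
        · rintro ⟨d, rfl⟩
          exact hmem d
        · intro hx
          have hx1 : x.1 ∈ D := ⟨⟨x, hx⟩, rfl⟩
          refine ⟨⟨x.1, hx1⟩, ?_⟩
          have hu := huniq x.1 x.2 (by simpa using hx) hx1
          show ((x.1 : H), C ⟨x.1, hx1⟩) = x
          rw [hu]
      rw [hr]
      exact hGc₀closed
    · refine sup_le ?_ ?_
      · intro x hx
        have hg : ((x, A x) : H × K) ∈ Gc₀ := by
          rw [hmemGc₀]
          exact G.le_topologicalClosure (Submodule.mem_sup_left ⟨x, hx, rfl⟩)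
        exact ⟨⟨(x, A x), hg⟩, rfl⟩
      · intro x hx
        have hg : ((x, B x) : H × K) ∈ Gc₀ := by
          rw [hmemGc₀]
          exact G.le_topologicalClosure (Submodule.mem_sup_right ⟨x, hx, rfl⟩)
        exact ⟨⟨(x, B x), hg⟩, rfl⟩
    · intro d hd
      have hg : (((d : H), A (d : H)) : H × K) ∈ Gc₀ := by
        rw [hmemGc₀]
        exact G.le_topologicalClosure (Submodule.mem_sup_left ⟨(d : H), hd, rfl⟩)
      exact huniq _ _ hg d.2
    · intro d hd
      have hg : (((d : H), B (d : H)) : H × K) ∈ Gc₀ := by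
        rw [hmemGc₀]
        exact G.le_topologicalClosure (Submodule.mem_sup_right ⟨(d : H), hd, rfl⟩)
      exact huniq _ _ hg d.2
end

section
/- Let H be a complex Hilbert space, K a nontrivial complex Hilbert space, and M, N closed subspaces of H. The following are equivalent: (i) for every pair of bounded linear operators A, B : H → K that coincide on M ∩ N there exists a bounded linear operator C : H → K with C x = A x for all x ∈ M and C x = B x for all x ∈ N; (ii) the subspace M + N is closed in H. -/
open Metric

set_option maxHeartbeats 1000000 in
set_option synthInstance.maxHeartbeats 200000 in
theorem stmt_2 {H K : Type*} [NormedAddCommGroup H] [InnerProductSpace ℂ H] [CompleteSpace H]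
    [NormedAddCommGroup K] [InnerProductSpace ℂ K] [CompleteSpace K] [Nontrivial K]
    (M N : Submodule ℂ H) (hM : IsClosed (M : Set H)) (hN : IsClosed (N : Set H)) :
    (∀ A B : H →L[ℂ] K, (∀ x ∈ M ⊓ N, A x = B x) →
        ∃ C : H →L[ℂ] K, (∀ x ∈ M, C x = A x) ∧ (∀ x ∈ N, C x = B x)) ↔
      IsClosed ((M ⊔ N : Submodule ℂ H) : Set H) := by
  constructor
  · -- forward direction: extension property implies M + N closed
    intro hext
    obtain ⟨k, hk⟩ := exists_ne (0 : K)
    have hknorm : (0 : ℝ) < ‖k‖ := norm_pos_iff.2 hk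
    haveI : CompleteSpace ((M ⊓ N)ᗮ : Submodule ℂ H) :=
      (Submodule.isClosed_orthogonal _).completeSpace_coe
    haveI : CompleteSpace (M ⊓ N : Submodule ℂ H) := by
      have : IsClosed ((M ⊓ N : Submodule ℂ H) : Set H) := by
        have : ((M ⊓ N : Submodule ℂ H) : Set H) = (M : Set H) ∩ (N : Set H) := rfl
        rw [this]; exact hM.inter hN
      exact this.completeSpace_coe
    -- the family of functionals on (M ⊓ N)ᗮ indexed by pairs (n, m) with ‖n + m‖ ≤ 1
    set W := ((M ⊓ N)ᗮ : Submodule ℂ H) with hW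
    set ι := {p : N × M // ‖(p.1 : H) + (p.2 : H)‖ ≤ 1} with hι
    set g : ι → (W →L[ℂ] ℂ) := fun i => (innerSL ℂ ((i.1.1 : H))).comp W.subtypeL with hg
    have hgapp : ∀ (i : ι) (u : W), g i u = inner ℂ ((i.1.1 : H)) (u : H) := fun i u => rfl
    -- pointwise boundedness
    have hpt : ∀ u : W, ∃ C, ∀ i : ι, ‖g i u‖ ≤ C := by
      intro u
      set B : H →L[ℂ] K := (innerSL ℂ ((u : H))).smulRight k with hB
      have hBapp : ∀ x : H, B x = (inner ℂ ((u : H)) x : ℂ) • k := fun x => rfl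
      have hagree : ∀ x ∈ M ⊓ N, (0 : H →L[ℂ] K) x = B x := by
        intro x hx
        have : (inner ℂ ((u : H)) x : ℂ) = 0 := by
          have := u.2
          rw [Submodule.mem_orthogonal] at this
          have h1 : (inner ℂ x ((u : H)) : ℂ) = 0 := this x hx
          rwa [inner_eq_zero_symm] at h1
        simp [hBapp, this]
      obtain ⟨C, hCM, hCN⟩ := hext 0 B hagree
      refine ⟨‖C‖ / ‖k‖, fun i => ?_⟩
      obtain ⟨⟨n, m⟩, hnm⟩ := i
      have h1 : C ((n : H) + (m : H)) = B n := by
        rw [map_add, hCN n n.2, hCM m m.2]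
        simp
      have h2 : ‖B (n : H)‖ ≤ ‖C‖ := by
        rw [← h1]
        calc ‖C ((n : H) + (m : H))‖ ≤ ‖C‖ * ‖(n : H) + (m : H)‖ := C.le_opNorm _
        _ ≤ ‖C‖ * 1 := by
            exact mul_le_mul_of_nonneg_left hnm (norm_nonneg _)
        _ = ‖C‖ := mul_one _
      have h3 : ‖B (n : H)‖ = ‖(inner ℂ ((u : H)) ((n : H)) : ℂ)‖ * ‖k‖ := by
        rw [hBapp]; exact norm_smul _ _
      have h4 : ‖g ⟨(n, m), hnm⟩ u‖ = ‖(inner ℂ ((u : H)) ((n : H)) : ℂ)‖ := by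
        rw [hgapp]
        exact norm_inner_symm _ _
      rw [h4, le_div_iff₀ hknorm]
      rw [h3] at h2
      exact h2
    obtain ⟨C', hC'⟩ := banach_steinhaus hpt
    have hC'0 : (0 : ℝ) ≤ C' := le_trans (norm_nonneg _) (hC' ⟨(0, 0), by simp⟩)
    -- key inequality
    have key : ∀ u : W, ∀ n ∈ N, ∀ m ∈ M,
        ‖(inner ℂ (n : H) ((u : H)) : ℂ)‖ ≤ C' * ‖(u : H)‖ * ‖n + m‖ := by
      intro u n hn m hm
      rcases eq_or_ne (n + m) 0 with h0 | h0
      · have hnMN : n ∈ M ⊓ N := by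
          constructor
          · have : n = -m := eq_neg_of_add_eq_zero_left h0
            rw [this]; exact M.neg_mem hm
          · exact hn
        have : (inner ℂ n ((u : H)) : ℂ) = 0 := by
          have := u.2
          rw [Submodule.mem_orthogonal] at this
          exact this n hnMN
        simp only [this, norm_zero]
        positivity
      · have ht : (0 : ℝ) < ‖n + m‖ := norm_pos_iff.2 h0
        set c : ℂ := (‖n + m‖ : ℂ)⁻¹ with hc
        have hcn : c • n ∈ N := N.smul_mem _ hn
        have hcm : c • m ∈ M := M.smul_mem _ hm
        have hnorm1 : ‖(c • n : H) + (c • m : H)‖ ≤ 1 := by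
          rw [← smul_add, norm_smul]
          simp only [hc]
          rw [norm_inv, Complex.norm_real, Real.norm_eq_abs, abs_of_pos ht]
          rw [inv_mul_cancel₀ ht.ne']
        have := hC' ⟨((⟨c • n, hcn⟩ : N), (⟨c • m, hcm⟩ : M)), hnorm1⟩
        have hle := le_trans ((g _).le_opNorm u) (mul_le_mul_of_nonneg_right this (norm_nonneg u))
        rw [hgapp] at hle
        simp only at hle
        have hinner : (inner ℂ ((c • n : H)) ((u : H)) : ℂ) =
            (starRingEnd ℂ c) * inner ℂ (n : H) ((u : H)) := inner_smul_left _ _ _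
        rw [hinner, norm_mul] at hle
        have hcnorm : ‖(starRingEnd ℂ) c‖ = ‖n + m‖⁻¹ := by
          rw [RingHomIsometric.norm_map]
          simp only [hc]
          rw [norm_inv, Complex.norm_real, Real.norm_eq_abs, abs_of_pos ht]
        rw [hcnorm] at hle
        have hunorm : ‖(u : H)‖ = ‖u‖ := rfl
        rw [inv_mul_le_iff₀ ht] at hle
        rw [hunorm]
        nlinarith [hle]
    -- now prove closedness via sequences
    have : IsSeqClosed ((M ⊔ N : Submodule ℂ H) : Set H) := by
      intro x z hx hlim
      have hdec : ∀ j, ∃ p : M × N, (p.1 : H) + (p.2 : H) = x j := by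
        intro j
        obtain ⟨m, hm, n, hn, hmn⟩ := Submodule.mem_sup.1 (hx j)
        exact ⟨(⟨m, hm⟩, ⟨n, hn⟩), hmn⟩
      choose p hp using hdec
      set m : ℕ → H := fun j => ((p j).1 : H) with hm
      set n : ℕ → H := fun j => ((p j).2 : H) with hn
      set pr : ℕ → H := fun j => (Submodule.orthogonalProjectionOnto (M ⊓ N) (n j) : H) with hpr
      set q : ℕ → H := fun j => n j - pr j with hq
      have hqW : ∀ j, q j ∈ W := fun j => Submodule.sub_starProjection_mem_orthogonal (n j)
      have hprMN : ∀ j, pr j ∈ M ⊓ N := fun j => (Submodule.orthogonalProjectionOnto (M ⊓ N) (n j)).2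
      have hqN : ∀ j, q j ∈ N := fun j => N.sub_mem (p j).2.2 (hprMN j).2
      -- Cauchy estimate
      have hest : ∀ j l, ‖q j - q l‖ ≤ C' * ‖x j - x l‖ := by
        intro j l
        have hdu : q j - q l ∈ W := W.sub_mem (hqW j) (hqW l)
        have hdn : n j - n l ∈ N := N.sub_mem (p j).2.2 (p l).2.2
        have hdm : m j - m l ∈ M := M.sub_mem (p j).1.2 (p l).1.2
        have h1 := key ⟨q j - q l, hdu⟩ (n j - n l) hdn (m j - m l) hdm
        have hsum : (n j - n l) + (m j - m l) = x j - x l := by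
          rw [← hp j, ← hp l]; abel
        rw [hsum] at h1
        have hinner : (inner ℂ (n j - n l) (q j - q l) : ℂ) = (‖q j - q l‖ : ℂ) ^ 2 := by
          have hsplit : n j - n l = (pr j - pr l) + (q j - q l) := by
            simp only [hq]; abel
          rw [hsplit, inner_add_left]
          have hz : (inner ℂ (pr j - pr l) (q j - q l) : ℂ) = 0 := by
            have := hdu
            rw [Submodule.mem_orthogonal] at this
            exact this _ ((M ⊓ N).sub_mem (hprMN j) (hprMN l))
          rw [hz, zero_add, inner_self_eq_norm_sq_to_K]
          norm_cast
        rw [hinner] at h1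
        have h2 : ‖((‖q j - q l‖ : ℂ)) ^ 2‖ = ‖q j - q l‖ ^ 2 := by
          rw [norm_pow, Complex.norm_real, Real.norm_eq_abs, abs_of_nonneg (norm_nonneg _)]
        rw [h2] at h1
        have hun : ‖((⟨q j - q l, hdu⟩ : W) : H)‖ = ‖q j - q l‖ := rfl
        rw [hun] at h1
        rcases eq_or_lt_of_le (norm_nonneg (q j - q l)) with h3 | h3
        · rw [← h3]
          positivity
        · nlinarith [norm_nonneg (x j - x l)]
      have hcx : CauchySeq x := hlim.cauchySeq
      have hcq : CauchySeq q := by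
        rw [Metric.cauchySeq_iff] at hcx ⊢
        intro ε hε
        obtain ⟨Nn, hNn⟩ := hcx (ε / (C' + 1)) (by positivity)
        refine ⟨Nn, fun a ha b hb => ?_⟩
        have := hest a b
        rw [dist_eq_norm]
        calc ‖q a - q b‖ ≤ C' * ‖x a - x b‖ := this
        _ ≤ (C' + 1) * ‖x a - x b‖ := by
            apply mul_le_mul_of_nonneg_right (by linarith) (norm_nonneg _)
        _ < (C' + 1) * (ε / (C' + 1)) := by
            apply mul_lt_mul_of_pos_left _ (by linarith)
            rw [← dist_eq_norm]
            exact hNn a ha b hb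
        _ = ε := by field_simp
      obtain ⟨q', hq'⟩ := cauchySeq_tendsto_of_complete hcq
      have hq'N : q' ∈ N := hN.mem_of_tendsto hq' (Filter.Eventually.of_forall hqN)
      have htend : Filter.Tendsto (fun j => x j - q j) Filter.atTop (nhds (z - q')) :=
        hlim.sub hq'
      have hmem : ∀ j, x j - q j ∈ M := by
        intro j
        have : x j - q j = m j + pr j := by
          rw [← hp j]; simp only [hq, hm, hn]; abel
        rw [this]
        exact M.add_mem (p j).1.2 (hprMN j).1
      have hzM : z - q' ∈ M := hM.mem_of_tendsto htend (Filter.Eventually.of_forall hmem)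
      have : z = (z - q') + q' := by abel
      rw [this]
      exact Submodule.add_mem_sup hzM hq'N
    exact this.isClosed
  · -- backward direction: M + N closed implies extension property
    intro hclosed A B hAB
    haveI : CompleteSpace ((M ⊔ N : Submodule ℂ H) : Submodule ℂ H) := hclosed.completeSpace_coe
    haveI : CompleteSpace M := hM.completeSpace_coe
    haveI : CompleteSpace N := hN.completeSpace_coe
    set S := (M ⊔ N : Submodule ℂ H) with hS
    -- well-definedness
    have key : ∀ (m m' : M) (n n' : N), (m : H) + (n : H) = (m' : H) + (n' : H) →
        A m + B n = A m' + B n' := by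
      intro m m' n n' h
      have h2 : (m : H) - (m' : H) = (n' : H) - (n : H) := by
        rw [sub_eq_sub_iff_add_eq_add, h]; abel
      have hdiff : (m : H) - (m' : H) ∈ M ⊓ N := by
        constructor
        · exact M.sub_mem m.2 m'.2
        · rw [h2]; exact N.sub_mem n'.2 n.2
      have h1 := hAB _ hdiff
      rw [map_sub, h2, map_sub] at h1
      exact (sub_eq_sub_iff_add_eq_add.mp h1).trans (add_comm _ _)
    have exdec : ∀ s : S, ∃ pp : M × N, ((pp.1 : H) + (pp.2 : H)) = (s : H) := by
      intro s
      obtain ⟨m, hm, n, hn, hmn⟩ := Submodule.mem_sup.1 s.2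
      exact ⟨(⟨m, hm⟩, ⟨n, hn⟩), hmn⟩
    choose dec hdec using exdec
    set f : S → K := fun s => A ((dec s).1 : H) + B ((dec s).2 : H) with hf
    have fdef : ∀ (s : S) (m : M) (n : N), (m : H) + (n : H) = (s : H) → f s = A m + B n := by
      intro s m n h
      exact key _ _ _ _ (by rw [hdec s, ← h])
    have fadd : ∀ s t : S, f (s + t) = f s + f t := by
      intro s t
      have h := fdef (s + t) ((dec s).1 + (dec t).1) ((dec s).2 + (dec t).2) (by
        push_cast
        rw [show ((dec s).1 : H) + ((dec t).1 : H) + (((dec s).2 : H) + ((dec t).2 : H))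
          = (((dec s).1 : H) + ((dec s).2 : H)) + (((dec t).1 : H) + ((dec t).2 : H)) by abel,
          hdec s, hdec t])
      rw [h]
      push_cast
      rw [map_add, map_add]
      simp only [hf]
      abel
    have fsmul : ∀ (c : ℂ) (s : S), f (c • s) = c • f s := by
      intro c s
      have h := fdef (c • s) (c • (dec s).1) (c • (dec s).2) (by
        push_cast
        rw [← smul_add, hdec s])
      rw [h]
      push_cast
      rw [map_smul, map_smul]
      simp only [hf]
      rw [smul_add]
    set ℓ : S →ₗ[ℂ] K := { toFun := f, map_add' := fadd, map_smul' := fsmul } with hℓ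
    -- continuity via open mapping theorem
    set Tlin : (M × N) →ₗ[ℂ] S :=
      { toFun := fun pp => ⟨(pp.1 : H) + (pp.2 : H), Submodule.add_mem_sup pp.1.2 pp.2.2⟩
        map_add' := by
          intro a b
          apply Subtype.ext
          simp only [Prod.fst_add, Prod.snd_add, Submodule.coe_add]
          abel
        map_smul' := by
          intro c a
          apply Subtype.ext
          simp only [Prod.smul_fst, Prod.smul_snd, Submodule.coe_smul, RingHom.id_apply]
          rw [smul_add] } with hTlin
    have hTbound : ∀ pp : M × N, ‖Tlin pp‖ ≤ 2 * ‖pp‖ := by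
      intro pp
      have h1 : ‖Tlin pp‖ = ‖(pp.1 : H) + (pp.2 : H)‖ := rfl
      rw [h1]
      calc ‖(pp.1 : H) + (pp.2 : H)‖ ≤ ‖(pp.1 : H)‖ + ‖(pp.2 : H)‖ := norm_add_le _ _
      _ ≤ ‖pp‖ + ‖pp‖ := add_le_add (norm_fst_le pp) (norm_snd_le pp)
      _ = 2 * ‖pp‖ := by ring
    set T : (M × N) →L[ℂ] S := Tlin.mkContinuous 2 hTbound with hT
    have hTsurj : Function.Surjective T := by
      intro s
      exact ⟨dec s, Subtype.ext (hdec s)⟩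
    obtain ⟨Cc, hCcpos, hCc⟩ := T.exists_preimage_norm_le hTsurj
    have fbound : ∀ s : S, ‖ℓ s‖ ≤ ((‖A‖ + ‖B‖) * Cc) * ‖s‖ := by
      intro s
      obtain ⟨pp, hpp, hppn⟩ := hCc s
      have h1 : ((pp.1 : H) + (pp.2 : H)) = (s : H) := congrArg Subtype.val hpp
      have h2 : ℓ s = A (pp.1 : H) + B (pp.2 : H) := fdef s pp.1 pp.2 h1
      rw [h2]
      have h3 : ‖(pp.1 : H)‖ ≤ Cc * ‖s‖ := le_trans (norm_fst_le pp) hppn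
      have h4 : ‖(pp.2 : H)‖ ≤ Cc * ‖s‖ := le_trans (norm_snd_le pp) hppn
      calc ‖A (pp.1 : H) + B (pp.2 : H)‖ ≤ ‖A (pp.1 : H)‖ + ‖B (pp.2 : H)‖ := norm_add_le _ _
      _ ≤ ‖A‖ * ‖(pp.1 : H)‖ + ‖B‖ * ‖(pp.2 : H)‖ :=
          add_le_add (A.le_opNorm _) (B.le_opNorm _)
      _ ≤ ‖A‖ * (Cc * ‖s‖) + ‖B‖ * (Cc * ‖s‖) := by
          apply add_le_add
          · exact mul_le_mul_of_nonneg_left h3 (norm_nonneg _)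
          · exact mul_le_mul_of_nonneg_left h4 (norm_nonneg _)
      _ = ((‖A‖ + ‖B‖) * Cc) * ‖s‖ := by ring
    set ℓc : S →L[ℂ] K := ℓ.mkContinuous ((‖A‖ + ‖B‖) * Cc) fbound with hℓc
    refine ⟨ℓc.comp (Submodule.orthogonalProjectionOnto S), ?_, ?_⟩
    · intro x hx
      have hxS : x ∈ S := Submodule.mem_sup_left hx
      have hproj : Submodule.orthogonalProjectionOnto S x = ⟨x, hxS⟩ :=
        Subtype.ext (Submodule.starProjection_eq_self_iff.2 hxS)
      show ℓc (Submodule.orthogonalProjectionOnto S x) = A x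
      rw [hproj]
      have : ℓc ⟨x, hxS⟩ = f ⟨x, hxS⟩ := rfl
      rw [this, fdef ⟨x, hxS⟩ ⟨x, hx⟩ 0 (by simp)]
      simp
    · intro x hx
      have hxS : x ∈ S := Submodule.mem_sup_right hx
      have hproj : Submodule.orthogonalProjectionOnto S x = ⟨x, hxS⟩ :=
        Subtype.ext (Submodule.starProjection_eq_self_iff.2 hxS)
      show ℓc (Submodule.orthogonalProjectionOnto S x) = B x
      rw [hproj]
      have : ℓc ⟨x, hxS⟩ = f ⟨x, hxS⟩ := rfl
      rw [this, fdef ⟨x, hxS⟩ 0 ⟨x, hx⟩ (by simp)]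
      simp
end

section
/- Let H and K be complex Hilbert spaces with H infinite-dimensional, and let A, B : H → K be bounded linear operators. The following are equivalent: (i) for every pair of closed subspaces M, N of H such that A and B coincide on M ∩ N, there exists a bounded linear operator C : H → K with C x = A x for all x ∈ M and C x = B x for all x ∈ N; (ii) A = B. -/
open scoped InnerProductSpace ComplexConjugate
open Filter Topology

lemma aux_exists_orthonormal_seq (E : Type*) [NormedAddCommGroup E] [InnerProductSpace ℂ E]
    [CompleteSpace E] (h : ¬ FiniteDimensional ℂ E) : ∃ e : ℕ → E, Orthonormal ℂ e := by
  obtain ⟨w, b, hb⟩ := exists_hilbertBasis ℂ E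
  have hw : w.Infinite := by
    by_contra hfin
    rw [Set.not_infinite] at hfin
    apply h
    have h1 : FiniteDimensional ℂ (Submodule.span ℂ w) := FiniteDimensional.span_of_finite ℂ hfin
    have h2 : (Submodule.span ℂ w).topologicalClosure = ⊤ := by
      have := b.dense_span
      rwa [hb, Subtype.range_coe] at this
    rw [(Submodule.closed_of_finiteDimensional _).submodule_topologicalClosure_eq] at h2
    rw [h2] at h1
    exact Submodule.topEquiv.finiteDimensional
  let f := hw.natEmbedding
  refine ⟨fun n => (f n : E), ?_⟩
  have := b.orthonormal.comp f f.injective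
  rwa [hb] at this

lemma aux_exists_orthonormal_perp {H : Type*} [NormedAddCommGroup H] [InnerProductSpace ℂ H]
    [CompleteSpace H] (hH : ¬ FiniteDimensional ℂ H) (u : H) :
    ∃ e : ℕ → H, Orthonormal ℂ e ∧ ∀ k, ⟪u, e k⟫_ℂ = 0 := by
  set V := (ℂ ∙ u)ᗮ with hVdef
  have hV : ¬ FiniteDimensional ℂ V := by
    intro hfin
    apply hH
    have h2 : (ℂ ∙ u) ⊔ V = ⊤ := Submodule.sup_orthogonal_of_hasOrthogonalProjection
    have h3 : FiniteDimensional ℂ ((ℂ ∙ u) ⊔ V : Submodule ℂ H) :=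
      Submodule.finiteDimensional_sup _ _
    rw [h2] at h3
    exact Submodule.topEquiv.finiteDimensional
  obtain ⟨e, he⟩ := aux_exists_orthonormal_seq V hV
  refine ⟨fun n => (e n : H), he.comp_linearIsometry V.subtypeₗᵢ, fun k => ?_⟩
  have := (e k).2
  rw [Submodule.mem_orthogonal] at this
  exact this u (Submodule.mem_span_singleton_self u)

lemma aux_vanish {H : Type*} [NormedAddCommGroup H] [NormedSpace ℂ H] {ι : Type*} (g : ι → H)
    (f : H →L[ℂ] ℂ) (hf : ∀ j, f (g j) = 0) {x : H}
    (hx : x ∈ (Submodule.span ℂ (Set.range g)).topologicalClosure) : f x = 0 := by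
  have h1 : Submodule.span ℂ (Set.range g) ≤ LinearMap.ker (f : H →ₗ[ℂ] ℂ) := by
    rw [Submodule.span_le]
    rintro _ ⟨j, rfl⟩
    exact hf j
  exact Submodule.topologicalClosure_minimal _ h1 (ContinuousLinearMap.isClosed_ker f) hx

lemma aux_ineq {H K : Type*} [NormedAddCommGroup H] [InnerProductSpace ℂ H]
    [NormedAddCommGroup K] [InnerProductSpace ℂ K] (A B C : H →L[ℂ] K) {M N : Submodule ℂ H}
    (h1 : ∀ x ∈ M, C x = A x) (h2 : ∀ x ∈ N, C x = B x) {m n : H} (hm : m ∈ M) (hn : n ∈ N) :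
    ‖B n - A n‖ ≤ (‖C‖ + ‖A‖) * ‖m - n‖ := by
  have key : B n - A n = C (n - m) + A (m - n) := by
    rw [map_sub, map_sub, h2 n hn, h1 m hm]; abel
  rw [key]
  calc ‖C (n - m) + A (m - n)‖ ≤ ‖C (n - m)‖ + ‖A (m - n)‖ := norm_add_le _ _
    _ ≤ ‖C‖ * ‖n - m‖ + ‖A‖ * ‖m - n‖ := add_le_add (C.le_opNorm _) (A.le_opNorm _)
    _ = (‖C‖ + ‖A‖) * ‖m - n‖ := by rw [norm_sub_rev n m]; ring

theorem stmt_3 {H K : Type*} [NormedAddCommGroup H] [InnerProductSpace ℂ H] [CompleteSpace H]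
    [NormedAddCommGroup K] [InnerProductSpace ℂ K] [CompleteSpace K]
    (hH : ¬ FiniteDimensional ℂ H) (A B : H →L[ℂ] K) :
    (∀ M N : Submodule ℂ H, IsClosed (M : Set H) → IsClosed (N : Set H) →
        (∀ x ∈ M ⊓ N, A x = B x) →
        ∃ C : H →L[ℂ] K, (∀ x ∈ M, C x = A x) ∧ (∀ x ∈ N, C x = B x)) ↔
      A = B := by
  constructor
  case mpr =>
    rintro rfl M N _ _ _
    exact ⟨A, fun x _ => rfl, fun x _ => rfl⟩
  intro hyp
  by_contra hAB
  obtain ⟨y, hy⟩ : ∃ y, A y ≠ B y := by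
    by_contra h
    push_neg at h
    exact hAB (ContinuousLinearMap.ext h)
  have hy0 : y ≠ 0 := by rintro rfl; simp at hy
  have hynorm : (‖y‖ : ℂ) ≠ 0 := by
    simpa using norm_ne_zero_iff.mpr hy0
  set u : H := (‖y‖ : ℂ)⁻¹ • y with hu
  have hnormu : ‖u‖ = 1 := by
    rw [hu, norm_smul, norm_inv, Complex.norm_real, norm_norm]
    exact inv_mul_cancel₀ (norm_ne_zero_iff.mpr hy0)
  have huu : ⟪u, u⟫_ℂ = 1 := by
    rw [inner_self_eq_norm_sq_to_K, hnormu]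
    norm_num
  have huAB : B u - A u ≠ 0 := by
    rw [hu]
    intro hcon
    apply hy
    rw [map_smul, map_smul, ← smul_sub] at hcon
    rcases smul_eq_zero.mp hcon with h | h
    · exact absurd h (inv_ne_zero hynorm)
    · exact (sub_eq_zero.mp h).symm
  obtain ⟨e, he, heu⟩ := aux_exists_orthonormal_perp hH u
  have hee := orthonormal_iff_ite.mp he
  have henorm : ∀ i, ‖e i‖ = 1 := he.1
  have heu' : ∀ k, ⟪e k, u⟫_ℂ = 0 := fun k => by
    rw [← inner_conj_symm, heu k, map_zero]
  set a : ℕ → H := fun k => e (2 * k) with ha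
  set b : ℕ → H := fun k => e (2 * k + 1) with hb
  have haa : ∀ i j, ⟪a i, a j⟫_ℂ = if i = j then 1 else 0 := by
    intro i j
    rw [ha, hee]
    rcases eq_or_ne i j with h | h
    · simp [h]
    · rw [if_neg (by omega), if_neg h]
  have hbb : ∀ i j, ⟪b i, b j⟫_ℂ = if i = j then 1 else 0 := by
    intro i j
    rw [hb, hee]
    rcases eq_or_ne i j with h | h
    · simp [h]
    · rw [if_neg (by omega), if_neg h]
  have hab : ∀ i j, ⟪a i, b j⟫_ℂ = 0 := fun i j => by
    rw [ha, hb, hee, if_neg (by omega)]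
  have hba : ∀ i j, ⟪b i, a j⟫_ℂ = 0 := fun i j => by
    rw [ha, hb, hee, if_neg (by omega)]
  have hua : ∀ j, ⟪u, a j⟫_ℂ = 0 := fun j => heu _
  have hub : ∀ j, ⟪u, b j⟫_ℂ = 0 := fun j => heu _
  have hau : ∀ j, ⟪a j, u⟫_ℂ = 0 := fun j => heu' _
  have hbu : ∀ j, ⟪b j, u⟫_ℂ = 0 := fun j => heu' _
  set c : ℕ → ℂ := fun k => 2 ^ k with hc
  set d : ℕ → ℂ := fun k => 2⁻¹ ^ k with hd
  have hdc : ∀ k, d k * c k = 1 := by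
    intro k
    rw [hd, hc, ← mul_pow]
    norm_num
  have hconjc : ∀ k, (starRingEnd ℂ) (c k) = c k := by
    intro k; rw [hc]; rw [map_pow, map_ofNat]
  have hconjd : ∀ k, (starRingEnd ℂ) (d k) = d k := by
    intro k; rw [hd]; rw [map_pow, map_inv₀, map_ofNat]
  set m1 : ℕ → H := fun k => u + c k • b k + d k • a k with hm1
  set n1 : ℕ → H := fun k => u + c k • b k with hn1
  set m2 : ℕ → H := fun k => c k • b k + d k • a k with hm2
  set n2 : ℕ → H := fun k => c k • b k with hn2
  set M1 := (Submodule.span ℂ (Set.range m1)).topologicalClosure with hM1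
  set N1 := (Submodule.span ℂ (Set.range n1)).topologicalClosure with hN1
  set M2 := (Submodule.span ℂ (Set.range m2)).topologicalClosure with hM2
  set N2 := (Submodule.span ℂ (Set.range n2)).topologicalClosure with hN2
  have hmem : ∀ (g : ℕ → H) (k : ℕ),
      g k ∈ (Submodule.span ℂ (Set.range g)).topologicalClosure := fun g k =>
    Submodule.le_topologicalClosure _ (Submodule.subset_span ⟨k, rfl⟩)
  -- inner products with generators
  have h_a_m1 : ∀ k j, ⟪a k, m1 j⟫_ℂ = if k = j then d j else 0 := by
    intro k j
    rw [hm1]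
    simp only [inner_add_right, inner_smul_right, hau, hab, haa]
    rcases eq_or_ne k j with h | h <;> simp [h]
  have h_b_m1 : ∀ k j, ⟪b k, m1 j⟫_ℂ = if k = j then c j else 0 := by
    intro k j
    rw [hm1]
    simp only [inner_add_right, inner_smul_right, hbu, hba, hbb]
    rcases eq_or_ne k j with h | h <;> simp [h]
  have h_a_n1 : ∀ k j, ⟪a k, n1 j⟫_ℂ = 0 := by
    intro k j
    rw [hn1]
    simp only [inner_add_right, inner_smul_right, hau, hab]
    ring
  have h_a_m2 : ∀ k j, ⟪a k, m2 j⟫_ℂ = if k = j then d j else 0 := by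
    intro k j
    rw [hm2]
    simp only [inner_add_right, inner_smul_right, hab, haa]
    rcases eq_or_ne k j with h | h <;> simp [h]
  have h_b_m2 : ∀ k j, ⟪b k, m2 j⟫_ℂ = if k = j then c j else 0 := by
    intro k j
    rw [hm2]
    simp only [inner_add_right, inner_smul_right, hba, hbb]
    rcases eq_or_ne k j with h | h <;> simp [h]
  have h_a_n2 : ∀ k j, ⟪a k, n2 j⟫_ℂ = 0 := by
    intro k j
    rw [hn2]
    simp only [inner_smul_right, hab]
    ring
  have hcoef : ∀ k, c k - (4 : ℂ) ^ k * d k = 0 := by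
    intro k
    rw [hc, hd, ← mul_pow]
    norm_num
  -- step: ⟪b k, x⟫ = 0 given x in M (M = M1 or M2) where generators satisfy the relation
  -- Intersection 1
  have hint1 : ∀ x, x ∈ M1 ⊓ N1 → x = 0 := by
    rintro x ⟨hxM, hxN⟩
    have h1 : ∀ k, ⟪a k, x⟫_ℂ = 0 := by
      intro k
      have := aux_vanish n1 (innerSL ℂ (a k)) (fun j => by
        rw [innerSL_apply_apply]; exact h_a_n1 k j) hxN
      rwa [innerSL_apply_apply] at this
    have h2 : ∀ k, ⟪b k, x⟫_ℂ = 0 := by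
      intro k
      have := aux_vanish m1 (innerSL ℂ (b k) - (4 : ℂ) ^ k • innerSL ℂ (a k)) (fun j => by
        simp only [ContinuousLinearMap.sub_apply, ContinuousLinearMap.smul_apply, innerSL_apply_apply,
          smul_eq_mul, h_b_m1, h_a_m1]
        rcases eq_or_ne k j with h | h
        · subst h; rw [if_pos rfl, if_pos rfl]; exact hcoef k
        · rw [if_neg h, if_neg h]; ring) hxM
      simp only [ContinuousLinearMap.sub_apply, ContinuousLinearMap.smul_apply, innerSL_apply_apply,
        smul_eq_mul, h1 k, mul_zero, sub_zero] at this
      exact this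
    -- summable
    have hsum : Summable (fun k => d k • b k) := by
      apply Summable.of_norm
      have hn : ∀ k, ‖d k • b k‖ = (2⁻¹ : ℝ) ^ k := by
        intro k
        rw [norm_smul, hb, henorm, mul_one, hd, norm_pow]
        norm_num
      simp only [hn]
      exact summable_geometric_of_lt_one (by norm_num) (by norm_num)
    set w : H := ∑' k, d k • b k with hw
    have h_m1_w : ∀ j, ⟪m1 j, w⟫_ℂ = 1 := by
      intro j
      have hmap : ⟪m1 j, w⟫_ℂ = ∑' k, ⟪m1 j, d k • b k⟫_ℂ := by
        rw [hw, ← innerSL_apply_apply]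
        exact ContinuousLinearMap.map_tsum _ hsum
      rw [hmap]
      have hterm : ∀ k, ⟪m1 j, d k • b k⟫_ℂ = if k = j then 1 else 0 := by
        intro k
        rw [inner_smul_right, ← inner_conj_symm, h_b_m1]
        rcases eq_or_ne k j with h | h
        · subst h
          rw [if_pos rfl, if_pos rfl, hconjc, hdc]
        · rw [if_neg h, if_neg h, map_zero, mul_zero]
      rw [tsum_congr hterm, tsum_eq_single j (fun k hk => if_neg hk)]
      exact if_pos rfl
    have h3 : ⟪u, x⟫_ℂ = 0 := by
      have := aux_vanish m1 (innerSL ℂ (u - w)) (fun j => by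
        rw [innerSL_apply_apply, inner_sub_left, ← inner_conj_symm w, h_m1_w, map_one]
        rw [hm1]
        simp only [inner_add_right, inner_smul_right, huu, hub, hua]
        ring) hxM
      rw [innerSL_apply_apply, inner_sub_left] at this
      have hwx : ⟪w, x⟫_ℂ = 0 := by
        have hmap : ⟪x, w⟫_ℂ = ∑' k, ⟪x, d k • b k⟫_ℂ := by
          rw [hw, ← innerSL_apply_apply]
          exact ContinuousLinearMap.map_tsum _ hsum
        have : ⟪x, w⟫_ℂ = 0 := by
          rw [hmap]
          have : ∀ k, ⟪x, d k • b k⟫_ℂ = 0 := by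
            intro k
            rw [inner_smul_right, ← inner_conj_symm, h2, map_zero, mul_zero]
          rw [tsum_congr this, tsum_zero]
        rw [← inner_conj_symm, this, map_zero]
      rw [hwx, sub_zero] at this
      exact this
    have h4 : ⟪x, x⟫_ℂ = 0 := by
      have hxu : ⟪x, u⟫_ℂ = 0 := by rw [← inner_conj_symm, h3, map_zero]
      have hxb : ∀ j, ⟪x, b j⟫_ℂ = 0 := fun j => by rw [← inner_conj_symm, h2, map_zero]
      have := aux_vanish n1 (innerSL ℂ x) (fun j => by
        simp only [innerSL_apply_apply, hn1, inner_add_right, inner_smul_right, hxu, hxb]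
        ring) hxN
      rwa [innerSL_apply_apply] at this
    exact inner_self_eq_zero.mp h4
  -- Intersection 2
  have hint2 : ∀ x, x ∈ M2 ⊓ N2 → x = 0 := by
    rintro x ⟨hxM, hxN⟩
    have h1 : ∀ k, ⟪a k, x⟫_ℂ = 0 := by
      intro k
      have := aux_vanish n2 (innerSL ℂ (a k)) (fun j => by
        rw [innerSL_apply_apply]; exact h_a_n2 k j) hxN
      rwa [innerSL_apply_apply] at this
    have h2 : ∀ k, ⟪b k, x⟫_ℂ = 0 := by
      intro k
      have := aux_vanish m2 (innerSL ℂ (b k) - (4 : ℂ) ^ k • innerSL ℂ (a k)) (fun j => by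
        simp only [ContinuousLinearMap.sub_apply, ContinuousLinearMap.smul_apply, innerSL_apply_apply,
          smul_eq_mul, h_b_m2, h_a_m2]
        rcases eq_or_ne k j with h | h
        · subst h; rw [if_pos rfl, if_pos rfl]; exact hcoef k
        · rw [if_neg h, if_neg h]; ring) hxM
      simp only [ContinuousLinearMap.sub_apply, ContinuousLinearMap.smul_apply, innerSL_apply_apply,
        smul_eq_mul, h1 k, mul_zero, sub_zero] at this
      exact this
    have h4 : ⟪x, x⟫_ℂ = 0 := by
      have := aux_vanish n2 (innerSL ℂ x) (fun j => by
        rw [innerSL_apply_apply, hn2, inner_smul_right, ← inner_conj_symm, h2, map_zero, mul_zero]) hxN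
      rwa [innerSL_apply_apply] at this
    exact inner_self_eq_zero.mp h4
  -- apply hypothesis
  obtain ⟨C1, hC1M, hC1N⟩ := hyp M1 N1 (Submodule.isClosed_topologicalClosure _)
    (Submodule.isClosed_topologicalClosure _)
    (fun x hx => by rw [hint1 x hx]; simp)
  obtain ⟨C2, hC2M, hC2N⟩ := hyp M2 N2 (Submodule.isClosed_topologicalClosure _)
    (Submodule.isClosed_topologicalClosure _)
    (fun x hx => by rw [hint2 x hx]; simp)
  have hdiffnorm : ∀ k, ‖d k • a k‖ = (2⁻¹ : ℝ) ^ k := by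
    intro k
    rw [norm_smul, ha, henorm, mul_one, hd, norm_pow]
    norm_num
  have key1 : ∀ k, ‖B (n1 k) - A (n1 k)‖ ≤ (‖C1‖ + ‖A‖) * (2⁻¹ : ℝ) ^ k := by
    intro k
    have := aux_ineq A B C1 hC1M hC1N (hmem m1 k) (hmem n1 k)
    have hd1 : m1 k - n1 k = d k • a k := by simp only [hm1, hn1]; abel
    rwa [hd1, hdiffnorm k] at this
  have key2 : ∀ k, ‖B (n2 k) - A (n2 k)‖ ≤ (‖C2‖ + ‖A‖) * (2⁻¹ : ℝ) ^ k := by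
    intro k
    have := aux_ineq A B C2 hC2M hC2N (hmem m2 k) (hmem n2 k)
    have hd2 : m2 k - n2 k = d k • a k := by simp only [hm2, hn2]; abel
    rwa [hd2, hdiffnorm k] at this
  have key : ∀ k, ‖B u - A u‖ ≤ (‖C1‖ + ‖A‖ + (‖C2‖ + ‖A‖)) * (2⁻¹ : ℝ) ^ k := by
    intro k
    have hdecomp : B u - A u = (B (n1 k) - A (n1 k)) - (B (n2 k) - A (n2 k)) := by
      have hn12 : n1 k - n2 k = u := by simp only [hn1, hn2]; abel
      rw [← hn12, map_sub, map_sub]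
      abel
    rw [hdecomp]
    calc ‖(B (n1 k) - A (n1 k)) - (B (n2 k) - A (n2 k))‖
        ≤ ‖B (n1 k) - A (n1 k)‖ + ‖B (n2 k) - A (n2 k)‖ := norm_sub_le _ _
      _ ≤ (‖C1‖ + ‖A‖) * (2⁻¹ : ℝ) ^ k + (‖C2‖ + ‖A‖) * (2⁻¹ : ℝ) ^ k :=
          add_le_add (key1 k) (key2 k)
      _ = (‖C1‖ + ‖A‖ + (‖C2‖ + ‖A‖)) * (2⁻¹ : ℝ) ^ k := by ring
  have htend : Tendsto (fun k : ℕ => (‖C1‖ + ‖A‖ + (‖C2‖ + ‖A‖)) * (2⁻¹ : ℝ) ^ k)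
      atTop (𝓝 0) := by
    have := tendsto_pow_atTop_nhds_zero_of_lt_one (r := (2⁻¹ : ℝ)) (by norm_num) (by norm_num)
    simpa using this.const_mul (‖C1‖ + ‖A‖ + (‖C2‖ + ‖A‖))
  have hle : ‖B u - A u‖ ≤ 0 := ge_of_tendsto' htend key
  exact huAB (norm_le_zero_iff.mp hle)
end

section
/- Let F, H, K be complex Hilbert spaces and A : F → H, B : F → K bounded linear operators with ker A ⊆ ker B. Then the subspace {(A x, B x) : x ∈ F} of H × K is closed if and only if range(A*) + range(B*) is a closed subspace of F. -/
open ContinuousLinearMap Submodule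

local notation "⟪" x ", " y "⟫" => @inner ℂ _ _ x y

lemma range_adjoint_eq_orth_ker {E G : Type*}
    [NormedAddCommGroup E] [InnerProductSpace ℂ E] [CompleteSpace E]
    [NormedAddCommGroup G] [InnerProductSpace ℂ G] [CompleteSpace G]
    (T : E →L[ℂ] G) (hT : IsClosed (LinearMap.range (T : E →ₗ[ℂ] G) : Set G)) :
    LinearMap.range (adjoint T : G →ₗ[ℂ] E) = (LinearMap.ker (T : E →ₗ[ℂ] G))ᗮ := by
  haveI : CompleteSpace (LinearMap.range (T : E →ₗ[ℂ] G)) := hT.completeSpace_coe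
  haveI : CompleteSpace (LinearMap.ker (T : E →ₗ[ℂ] G)) := T.isClosed_ker.completeSpace_coe
  set N := LinearMap.ker (T : E →ₗ[ℂ] G) with hN
  set R := LinearMap.range (T : E →ₗ[ℂ] G) with hR
  apply le_antisymm
  · rintro _ ⟨y, rfl⟩
    rw [Submodule.mem_orthogonal]
    intro u hu
    rw [ContinuousLinearMap.coe_coe, adjoint_inner_right, show T u = 0 from LinearMap.mem_ker.mp hu, inner_zero_left]
  · -- build the bijection T₀ : Nᗮ → R
    have hmem : ∀ z : Nᗮ, T (z : E) ∈ R := fun z => LinearMap.mem_range_self (T : E →ₗ[ℂ] G) (z : E)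
    set T₀ : Nᗮ →L[ℂ] R := (T.comp Nᗮ.subtypeL).codRestrict R hmem with hT₀
    have hcoe : ∀ z : Nᗮ, (T₀ z : G) = T (z : E) := fun z => rfl
    have hinj : LinearMap.ker (T₀ : Nᗮ →ₗ[ℂ] R) = ⊥ := by
      rw [LinearMap.ker_eq_bot']
      intro z hz
      have h1 : (z : E) ∈ N := by
        have : T (z : E) = 0 := by
          have := congrArg (Subtype.val) hz
          simpa [hcoe] using this
        simpa [hN, LinearMap.mem_ker] using this
      have h2 : (z : E) ∈ Nᗮ := z.2
      have : (z : E) = 0 := by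
        have := (Submodule.mem_orthogonal _ _).mp h2 _ h1
        simpa [inner_self_eq_zero] using this
      exact Subtype.ext this
    have hsurj : LinearMap.range (T₀ : Nᗮ →ₗ[ℂ] R) = ⊤ := by
      rw [LinearMap.range_eq_top]
      rintro ⟨w, z, rfl⟩
      refine ⟨⟨z - (orthogonalProjection N z : E), sub_starProjection_mem_orthogonal z⟩, ?_⟩
      apply Subtype.ext
      have : T ((orthogonalProjection N z : E)) = 0 := (orthogonalProjection N z).2
      simpa [hcoe, map_sub] using this
    set e := ContinuousLinearEquiv.ofBijective T₀ hinj hsurj with he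
    intro x hx
    set φ : G →L[ℂ] ℂ :=
      (innerSL ℂ x).comp (Nᗮ.subtypeL.comp ((e.symm : R →L[ℂ] Nᗮ).comp
        (orthogonalProjection R))) with hφ
    set y := (InnerProductSpace.toDual ℂ G).symm φ with hy
    refine ⟨y, ?_⟩
    apply ext_inner_right ℂ
    intro z
    rw [ContinuousLinearMap.coe_coe, adjoint_inner_left]
    have h1 : ⟪y, T z⟫ = φ (T z) := InnerProductSpace.toDual_symm_apply
    rw [h1]
    set p : Nᗮ := ⟨z - (orthogonalProjection N z : E), sub_starProjection_mem_orthogonal z⟩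
      with hp
    have hTz : T z = T (p : E) := by
      have : T ((orthogonalProjection N z : E)) = 0 := (orthogonalProjection N z).2
      simp only [Submodule.coe_orthogonalProjection_apply] at this
      simp [hp, map_sub, this]
    have hval : ((e p : R) : G) = T z := by
      have : e p = T₀ p := by rw [he]; rfl
      rw [this, hcoe, ← hTz]
    have hproj : orthogonalProjection R (T z) = e p := by
      calc orthogonalProjection R (T z) = orthogonalProjection R ((e p : R) : G) := by rw [hval]
      _ = e p := orthogonalProjection_mem_subspace_eq_self _
    have h2 : φ (T z) = ⟪x, (p : E)⟫ := by
      simp [hφ, hproj]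
    rw [h2]
    have hxn : ⟪x, (orthogonalProjection N z : E)⟫ = 0 :=
      (Submodule.mem_orthogonal' _ _).mp hx _ (orthogonalProjection N z).2
    show ⟪x, z - (orthogonalProjection N z : E)⟫ = ⟪x, z⟫
    rw [inner_sub_right, hxn, sub_zero]

lemma isClosed_range_adjoint_of {E G : Type*}
    [NormedAddCommGroup E] [InnerProductSpace ℂ E] [CompleteSpace E]
    [NormedAddCommGroup G] [InnerProductSpace ℂ G] [CompleteSpace G]
    (T : E →L[ℂ] G) (hT : IsClosed (LinearMap.range (T : E →ₗ[ℂ] G) : Set G)) :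
    IsClosed (LinearMap.range (adjoint T : G →ₗ[ℂ] E) : Set E) := by
  rw [range_adjoint_eq_orth_ker T hT]
  exact Submodule.isClosed_orthogonal _

theorem stmt_7 {F H K : Type*}
    [NormedAddCommGroup F] [InnerProductSpace ℂ F] [CompleteSpace F]
    [NormedAddCommGroup H] [InnerProductSpace ℂ H] [CompleteSpace H]
    [NormedAddCommGroup K] [InnerProductSpace ℂ K] [CompleteSpace K]
    (A : F →L[ℂ] H) (B : F →L[ℂ] K)
    (hker : LinearMap.ker (A : F →ₗ[ℂ] H) ≤ LinearMap.ker (B : F →ₗ[ℂ] K)) :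
    IsClosed (Set.range fun x : F => ((A x, B x) : H × K)) ↔
      IsClosed ((LinearMap.range (ContinuousLinearMap.adjoint A : H →ₗ[ℂ] F) ⊔
        LinearMap.range (ContinuousLinearMap.adjoint B : K →ₗ[ℂ] F) : Submodule ℂ F) : Set F) := by
  set e : WithLp 2 (H × K) ≃L[ℂ] H × K := WithLp.prodContinuousLinearEquiv 2 ℂ H K with he
  set T : F →L[ℂ] WithLp 2 (H × K) := (e.symm : (H × K) →L[ℂ] WithLp 2 (H × K)).comp (A.prod B)
    with hT
  have hrange : (Set.range fun x : F => ((A x, B x) : H × K)) = e '' Set.range T := by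
    rw [← Set.range_comp]
    refine congrArg _ (funext fun x => ?_)
    simp [hT, he]
  have hgraph : IsClosed (Set.range fun x : F => ((A x, B x) : H × K)) ↔
      IsClosed (Set.range T) := by
    rw [hrange]
    exact e.toHomeomorph.isClosed_image
  have hadj : ∀ y : WithLp 2 (H × K), adjoint T y = adjoint A y.fst + adjoint B y.snd := by
    intro y
    apply ext_inner_right ℂ
    intro z
    rw [adjoint_inner_left, inner_add_left, adjoint_inner_left, adjoint_inner_left]
    have : T z = (WithLp.equiv 2 (H × K)).symm (A z, B z) := rfl
    rw [this, WithLp.prod_inner_apply]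
    simp
  have hradj : LinearMap.range (adjoint T : WithLp 2 (H × K) →ₗ[ℂ] F) =
      LinearMap.range (adjoint A : H →ₗ[ℂ] F) ⊔ LinearMap.range (adjoint B : K →ₗ[ℂ] F) := by
    apply le_antisymm
    · rintro _ ⟨y, rfl⟩
      rw [ContinuousLinearMap.coe_coe, hadj]
      exact Submodule.add_mem_sup (LinearMap.mem_range_self _ _) (LinearMap.mem_range_self _ _)
    · apply sup_le
      · rintro _ ⟨h, rfl⟩
        refine ⟨(WithLp.equiv 2 (H × K)).symm (h, 0), ?_⟩
        rw [ContinuousLinearMap.coe_coe, hadj]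
        simp
      · rintro _ ⟨k, rfl⟩
        refine ⟨(WithLp.equiv 2 (H × K)).symm (0, k), ?_⟩
        rw [ContinuousLinearMap.coe_coe, hadj]
        simp
  rw [hgraph, ← hradj]
  constructor
  · intro hc
    exact isClosed_range_adjoint_of T hc
  · intro hc
    have := isClosed_range_adjoint_of (adjoint T) hc
    rwa [adjoint_adjoint] at this
end

section
/- Let F, H, K be complex Hilbert spaces and A : F → H, B : F → K bounded linear operators with ker A ⊆ ker B. If range(A*) + range(B*) is a closed subspace of F, then the preimage (B*)⁻¹(range(A*)) is dense in K. -/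
set_option maxHeartbeats 1000000
set_option synthInstance.maxHeartbeats 400000

open ContinuousLinearMap Filter Topology ComplexInnerProductSpace

theorem stmt_8 {F H K : Type*}
    [NormedAddCommGroup F] [InnerProductSpace ℂ F] [CompleteSpace F]
    [NormedAddCommGroup H] [InnerProductSpace ℂ H] [CompleteSpace H]
    [NormedAddCommGroup K] [InnerProductSpace ℂ K] [CompleteSpace K]
    (A : F →L[ℂ] H) (B : F →L[ℂ] K)
    (hker : LinearMap.ker (A : F →ₗ[ℂ] H) ≤ LinearMap.ker (B : F →ₗ[ℂ] K))
    (hcl : IsClosed ((LinearMap.range (ContinuousLinearMap.adjoint A : H →ₗ[ℂ] F) ⊔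
      LinearMap.range (ContinuousLinearMap.adjoint B : K →ₗ[ℂ] F) : Submodule ℂ F) : Set F)) :
    Dense {k : K |
      ContinuousLinearMap.adjoint B k ∈ LinearMap.range (ContinuousLinearMap.adjoint A : H →ₗ[ℂ] F)} := by
  set A' := ContinuousLinearMap.adjoint A with hA'def
  set B' := ContinuousLinearMap.adjoint B with hB'def
  set Y : Submodule ℂ F := LinearMap.range (A' : H →ₗ[ℂ] F) ⊔ LinearMap.range (B' : K →ₗ[ℂ] F) with hYdef
  haveI : CompleteSpace Y := hcl.completeSpace_coe
  -- The map (h, k) ↦ A* h + B* k, corestricted to Y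
  set L : (H × K) →L[ℂ] F :=
    A'.comp (ContinuousLinearMap.fst ℂ H K) + B'.comp (ContinuousLinearMap.snd ℂ H K) with hLdef
  have hLapply : ∀ p : H × K, L p = A' p.1 + B' p.2 := fun p => rfl
  have hLmem : ∀ p : H × K, L p ∈ Y := fun p => by
    rw [hLapply]
    exact Submodule.add_mem_sup (LinearMap.mem_range_self (A' : H →ₗ[ℂ] F) p.1)
      (LinearMap.mem_range_self (B' : K →ₗ[ℂ] F) p.2)
  set T : (H × K) →L[ℂ] Y := L.codRestrict Y hLmem with hTdef
  have hTsurj : Function.Surjective T := by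
    rintro ⟨v, hv⟩
    rcases Submodule.mem_sup.1 hv with ⟨a, ⟨h, rfl⟩, b, ⟨k, rfl⟩, rfl⟩
    exact ⟨(h, k), Subtype.ext rfl⟩
  obtain ⟨C, hCpos, hC⟩ := T.exists_preimage_norm_le hTsurj
  -- key estimate : for v ∈ Y, ‖v‖ ≤ C (‖A v‖ + ‖B v‖)
  have key : ∀ v ∈ Y, ‖v‖ ≤ C * (‖A v‖ + ‖B v‖) := by
    intro v hv
    obtain ⟨x, hx, hxn⟩ := hC ⟨v, hv⟩
    have hxv : A' x.1 + B' x.2 = v := congrArg Subtype.val hx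
    have hnorm : ‖(⟨v, hv⟩ : Y)‖ = ‖v‖ := rfl
    rw [hnorm] at hxn
    have h1 : ‖v‖ ^ 2 ≤ C * ‖v‖ * (‖A v‖ + ‖B v‖) := by
      calc ‖v‖ ^ 2 = RCLike.re (⟪v, v⟫) := (inner_self_eq_norm_sq v).symm
        _ = RCLike.re (⟪x.1, A v⟫ + ⟪x.2, B v⟫) := by
            rw [← hxv, inner_add_left, ContinuousLinearMap.adjoint_inner_left,
              ContinuousLinearMap.adjoint_inner_left]
        _ ≤ ‖⟪x.1, A v⟫ + ⟪x.2, B v⟫‖ := RCLike.re_le_norm _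
        _ ≤ ‖⟪x.1, A v⟫‖ + ‖⟪x.2, B v⟫‖ := norm_add_le _ _
        _ ≤ ‖x.1‖ * ‖A v‖ + ‖x.2‖ * ‖B v‖ := by
            gcongr <;> exact norm_inner_le_norm _ _
        _ ≤ (C * ‖v‖) * ‖A v‖ + (C * ‖v‖) * ‖B v‖ := by
            gcongr
            · exact le_trans (norm_fst_le x) hxn
            · exact le_trans (norm_snd_le x) hxn
        _ = C * ‖v‖ * (‖A v‖ + ‖B v‖) := by ring
    rcases eq_or_lt_of_le (norm_nonneg v) with h0 | h0
    · rw [← h0]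
      positivity
    · have := h1
      rw [pow_two] at this
      have h2 : ‖v‖ * ‖v‖ ≤ (C * (‖A v‖ + ‖B v‖)) * ‖v‖ := by
        calc ‖v‖ * ‖v‖ ≤ C * ‖v‖ * (‖A v‖ + ‖B v‖) := this
          _ = (C * (‖A v‖ + ‖B v‖)) * ‖v‖ := by ring
      exact le_of_mul_le_mul_right h2 h0
  -- the target set is a submodule
  set S : Submodule ℂ K := (LinearMap.range (A' : H →ₗ[ℂ] F)).comap (B' : K →ₗ[ℂ] F) with hSdef
  have hSset : {k : K | B' k ∈ LinearMap.range (A' : H →ₗ[ℂ] F)} = (S : Set K) := rfl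
  rw [hSset, Submodule.dense_iff_topologicalClosure_eq_top,
    Submodule.topologicalClosure_eq_top_iff, Submodule.eq_bot_iff]
  intro k₀ hk₀
  -- orthogonality step, in the L² product
  set G : F →L[ℂ] WithLp 2 (H × K) :=
    ((WithLp.prodContinuousLinearEquiv 2 ℂ H K).symm : (H × K) →L[ℂ] WithLp 2 (H × K)).comp
      (A.prod B) with hGdef
  have hGapply : ∀ f : F, G f = (WithLp.equiv 2 (H × K)).symm (A f, B f) := fun f => rfl
  set z : WithLp 2 (H × K) := (WithLp.equiv 2 (H × K)).symm (0, k₀) with hzdef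
  have hzmem : z ∈ (LinearMap.range (G : F →ₗ[ℂ] WithLp 2 (H × K))).topologicalClosure := by
    rw [← Submodule.orthogonal_orthogonal_eq_closure, Submodule.mem_orthogonal]
    intro u hu
    have h0 : A' u.fst + B' u.snd = 0 := by
      have hf : ∀ f : F, ⟪f, A' u.fst + B' u.snd⟫ = 0 := by
        intro f
        have h := (Submodule.mem_orthogonal _ _).1 hu (G f) (LinearMap.mem_range_self (G : F →ₗ[ℂ] WithLp 2 (H × K)) f)
        rw [WithLp.prod_inner_apply] at h
        calc ⟪f, A' u.fst + B' u.snd⟫ = ⟪A f, u.fst⟫ + ⟪B f, u.snd⟫ := by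
              rw [inner_add_right, ContinuousLinearMap.adjoint_inner_right,
                ContinuousLinearMap.adjoint_inner_right]
          _ = 0 := h
      have := hf (A' u.fst + B' u.snd)
      rwa [inner_self_eq_zero] at this
    have hu2 : u.snd ∈ S := by
      refine ⟨-u.fst, ?_⟩
      show A' (-u.fst) = B' u.snd
      rw [map_neg]
      exact neg_eq_of_add_eq_zero_left (by rw [add_comm] at h0; exact h0)
    have hzero : ⟪u.snd, k₀⟫ = 0 := (Submodule.mem_orthogonal _ _).1 hk₀ _ hu2
    rw [WithLp.prod_inner_apply]
    have h01 : ⟪u.ofLp.1, z.ofLp.1⟫ = 0 := by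
      show ⟪u.fst, (0 : H)⟫ = 0
      exact inner_zero_right _
    have h02 : ⟪u.ofLp.2, z.ofLp.2⟫ = 0 := hzero
    rw [h01, h02, add_zero]
  -- extract a sequence
  rw [← SetLike.mem_coe, Submodule.topologicalClosure_coe] at hzmem
  obtain ⟨g, hg, hgt⟩ := mem_closure_iff_seq_limit.1 hzmem
  choose f hf using hg
  have hpair : Tendsto (fun n => (A (f n), B (f n))) atTop (𝓝 ((0 : H), k₀)) := by
    have h1 : (fun n => (A (f n), B (f n)))
        = fun n => (WithLp.prodContinuousLinearEquiv 2 ℂ H K) (g n) := by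
      funext n
      rw [← hf n]
      rfl
    have h2 : ((0 : H), k₀) = (WithLp.prodContinuousLinearEquiv 2 ℂ H K) z := rfl
    rw [h1, h2]
    exact ((WithLp.prodContinuousLinearEquiv 2 ℂ H K).continuous.tendsto z).comp hgt
  have hAf : Tendsto (fun n => A (f n)) atTop (𝓝 0) := by
    have := (continuous_fst.tendsto ((0 : H), k₀)).comp hpair
    simpa [Function.comp_def] using this
  have hBf : Tendsto (fun n => B (f n)) atTop (𝓝 k₀) := by
    have := (continuous_snd.tendsto ((0 : H), k₀)).comp hpair
    simpa [Function.comp_def] using this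
  -- project the sequence to (ker A)ᗮ ⊆ Y
  haveI : CompleteSpace (LinearMap.ker (A : F →ₗ[ℂ] H)) := A.isClosed_ker.completeSpace_coe
  choose u hu v hv huv using fun n =>
    Submodule.exists_add_mem_mem_orthogonal (K := LinearMap.ker (A : F →ₗ[ℂ] H)) (f n)
  have hkerY : (LinearMap.ker (A : F →ₗ[ℂ] H))ᗮ ≤ Y := by
    have h1 : LinearMap.ker (A : F →ₗ[ℂ] H) = (LinearMap.range (A' : H →ₗ[ℂ] F))ᗮ := by
      ext w
      rw [LinearMap.mem_ker, Submodule.mem_orthogonal]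
      constructor
      · rintro hw _ ⟨h, rfl⟩
        rw [ContinuousLinearMap.coe_coe, ContinuousLinearMap.adjoint_inner_left, (show A w = 0 from hw), inner_zero_right]
      · intro hw
        have := hw (A' (A w)) (LinearMap.mem_range_self (A' : H →ₗ[ℂ] F) (A w))
        rw [ContinuousLinearMap.adjoint_inner_left, inner_self_eq_zero] at this
        exact this
    rw [h1, Submodule.orthogonal_orthogonal_eq_closure]
    exact Submodule.topologicalClosure_minimal _ le_sup_left hcl
  have hAv : ∀ n, A (v n) = A (f n) := by
    intro n
    have : A (f n) = A (u n) + A (v n) := by rw [huv n, map_add]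
    rw [this, (show A (u n) = 0 from LinearMap.mem_ker.1 (hu n)), zero_add]
  have hBv : ∀ n, B (v n) = B (f n) := by
    intro n
    have : B (f n) = B (u n) + B (v n) := by rw [huv n, map_add]
    rw [this, (show B (u n) = 0 from LinearMap.mem_ker.1 (hker (hu n))), zero_add]
  -- v is Cauchy
  have hCv : CauchySeq v := by
    rw [Metric.cauchySeq_iff]
    intro ε hε
    have hδ : (0:ℝ) < ε / (2 * (C + 1)) := by positivity
    obtain ⟨N₁, hN₁⟩ := Metric.cauchySeq_iff.1 hAf.cauchySeq _ hδ
    obtain ⟨N₂, hN₂⟩ := Metric.cauchySeq_iff.1 hBf.cauchySeq _ hδ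
    refine ⟨max N₁ N₂, fun m hm n hn => ?_⟩
    have h1 := hN₁ m (le_trans (le_max_left _ _) hm) n (le_trans (le_max_left _ _) hn)
    have h2 := hN₂ m (le_trans (le_max_right _ _) hm) n (le_trans (le_max_right _ _) hn)
    rw [dist_eq_norm] at h1 h2 ⊢
    have hvmn : v m - v n ∈ Y := hkerY (Submodule.sub_mem _ (hv m) (hv n))
    calc ‖v m - v n‖ ≤ C * (‖A (v m - v n)‖ + ‖B (v m - v n)‖) := key _ hvmn
      _ = C * (‖A (f m) - A (f n)‖ + ‖B (f m) - B (f n)‖) := by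
          rw [map_sub, map_sub, hAv, hAv, hBv, hBv]
      _ ≤ C * (ε / (2 * (C + 1)) + ε / (2 * (C + 1))) :=
          mul_le_mul_of_nonneg_left (add_le_add h1.le h2.le) hCpos.le
      _ = ε * (C / (C + 1)) := by field_simp; ring
      _ < ε * 1 := by
          apply mul_lt_mul_of_pos_left _ hε
          rw [div_lt_one (by linarith)]
          linarith
      _ = ε := mul_one ε
  obtain ⟨w, hw⟩ := cauchySeq_tendsto_of_complete hCv
  have hAw : A w = 0 := by
    have h1 : Tendsto (fun n => A (v n)) atTop (𝓝 (A w)) := (A.continuous.tendsto w).comp hw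
    have h2 : Tendsto (fun n => A (v n)) atTop (𝓝 0) := by
      have he : (fun n => A (v n)) = fun n => A (f n) := funext hAv
      rw [he]; exact hAf
    exact tendsto_nhds_unique h1 h2
  have hBw : B w = k₀ := by
    have h1 : Tendsto (fun n => B (v n)) atTop (𝓝 (B w)) := (B.continuous.tendsto w).comp hw
    have h2 : Tendsto (fun n => B (v n)) atTop (𝓝 k₀) := by
      have he : (fun n => B (v n)) = fun n => B (f n) := funext hBv
      rw [he]; exact hBf
    exact tendsto_nhds_unique h1 h2
  have : B w = 0 := LinearMap.mem_ker.1 (hker (LinearMap.mem_ker.2 hAw))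
  rw [← hBw, this]
end

section
/- Let F, H, K be complex Hilbert spaces and A : F → H, B : F → K bounded linear operators. The operator equation B = X ∘ A has a solution X that is a bounded linear operator from H to K if and only if range(B*) ⊆ range(A*). -/
open ContinuousLinearMap
open scoped ComplexInnerProductSpace

theorem stmt_9 {F H K : Type*}
    [NormedAddCommGroup F] [InnerProductSpace ℂ F] [CompleteSpace F]
    [NormedAddCommGroup H] [InnerProductSpace ℂ H] [CompleteSpace H]
    [NormedAddCommGroup K] [InnerProductSpace ℂ K] [CompleteSpace K]
    (A : F →L[ℂ] H) (B : F →L[ℂ] K) :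
    (∃ X : H →L[ℂ] K, ∀ x : F, X (A x) = B x) ↔
      LinearMap.range (ContinuousLinearMap.adjoint B : K →ₗ[ℂ] F) ≤
        LinearMap.range (ContinuousLinearMap.adjoint A : H →ₗ[ℂ] F) := by
  constructor
  · rintro ⟨X, hX⟩ y ⟨k, rfl⟩
    have hB : B = X.comp A := by ext x; simp [hX x]
    refine ⟨ContinuousLinearMap.adjoint X k, ?_⟩
    rw [hB, ContinuousLinearMap.adjoint_comp]
    rfl
  · intro hr
    set A' := ContinuousLinearMap.adjoint A with hA'
    set B' := ContinuousLinearMap.adjoint B with hB'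
    set N : Submodule ℂ H := LinearMap.ker (A' : H →ₗ[ℂ] F) with hN
    have hNc : IsClosed (N : Set H) := isClosed_ker A'
    haveI : CompleteSpace N := hNc.completeSpace_coe
    set M : Submodule ℂ H := Nᗮ with hM
    have hex : ∀ k : K, ∃ h : H, h ∈ M ∧ A' h = B' k := by
      intro k
      obtain ⟨h, hh⟩ := hr ⟨k, rfl⟩
      refine ⟨h - (N.orthogonalProjectionOnto h : H),
        N.sub_starProjection_mem_orthogonal h, ?_⟩
      have h0 : A' ((N.orthogonalProjectionOnto h : H)) = 0 :=
        (N.orthogonalProjectionOnto h).2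
      rw [map_sub, h0, sub_zero]; exact hh
    have huniq : ∀ h₁ h₂ : H, h₁ ∈ M → h₂ ∈ M → A' h₁ = A' h₂ → h₁ = h₂ := by
      intro h₁ h₂ hm1 hm2 he
      have hk : h₁ - h₂ ∈ N := by
        simp only [hN, LinearMap.mem_ker, ContinuousLinearMap.coe_coe, map_sub, he, sub_self]
      have hm : h₁ - h₂ ∈ M := M.sub_mem hm1 hm2
      have h0 : ⟪h₁ - h₂, h₁ - h₂⟫ = 0 :=
        (Submodule.mem_orthogonal N (h₁ - h₂)).mp hm _ hk
      exact sub_eq_zero.mp (inner_self_eq_zero.mp h0)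
    choose g0 hg0M hg0A using hex
    have gadd : ∀ k₁ k₂, g0 (k₁ + k₂) = g0 k₁ + g0 k₂ := by
      intro k₁ k₂
      refine huniq _ _ (hg0M _) (M.add_mem (hg0M k₁) (hg0M k₂)) ?_
      rw [hg0A, map_add, map_add, hg0A, hg0A]
    have gsmul : ∀ (c : ℂ) k, g0 (c • k) = c • g0 k := by
      intro c k
      refine huniq _ _ (hg0M _) (M.smul_mem c (hg0M k)) ?_
      rw [hg0A, map_smul, map_smul, hg0A]
    let g : K →ₗ[ℂ] H :=
      { toFun := g0, map_add' := gadd, map_smul' := gsmul }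
    have hgc : Continuous g := by
      refine g.continuous_of_seq_closed_graph ?_
      intro u x y hu hgu
      refine (huniq y (g0 x) ?_ (hg0M x) ?_).symm ▸ rfl
      · exact hM ▸ (Submodule.isClosed_orthogonal N).mem_of_tendsto hgu
          (Filter.Eventually.of_forall fun n => hg0M (u n))
      · have h1 : Filter.Tendsto (fun n => A' (g0 (u n))) Filter.atTop (nhds (A' y)) :=
          (A'.continuous.tendsto _).comp hgu
        have h2 : Filter.Tendsto (fun n => B' (u n)) Filter.atTop (nhds (B' x)) :=
          (B'.continuous.tendsto _).comp hu
        have h3 : (fun n => A' (g0 (u n))) = fun n => B' (u n) := by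
          ext n; exact hg0A (u n)
        rw [hg0A]
        exact tendsto_nhds_unique (h3 ▸ h1) h2
    let G : K →L[ℂ] H := ⟨g, hgc⟩
    refine ⟨ContinuousLinearMap.adjoint G, fun x => ?_⟩
    refine ext_inner_right ℂ fun k => ?_
    rw [ContinuousLinearMap.adjoint_inner_left]
    have : (G k : H) = g0 k := rfl
    rw [this, ← ContinuousLinearMap.adjoint_inner_right A, ← hA', hg0A, hB',
      ContinuousLinearMap.adjoint_inner_right]
end

section
/- Let F, H, K be complex Hilbert spaces and A : F → H, B : F → K bounded linear operators. The following are equivalent: (i) for every sequence (x_n) in F, if A x_n → 0 then B x_n → 0; (ii) range(B*) ⊆ range(A*). -/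
open ContinuousLinearMap Filter Topology

noncomputable section

variable {F H : Type*}
    [NormedAddCommGroup F] [InnerProductSpace ℂ F] [CompleteSpace F]
    [NormedAddCommGroup H] [InnerProductSpace ℂ H] [CompleteSpace H]

local notation "⟪" x ", " y "⟫" => @inner ℂ _ _ x y

/-- Key lemma: if `‖⟪z, x⟫‖ ≤ c * ‖A x‖` for all `x`, then `z ∈ range A†`. -/
lemma aux_mem_range_adjoint (A : F →L[ℂ] H) (z : F) (c : ℝ)
    (hc : ∀ x : F, ‖(⟪z, x⟫ : ℂ)‖ ≤ c * ‖A x‖) :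
    z ∈ LinearMap.range (ContinuousLinearMap.adjoint A : H →ₗ[ℂ] F) := by
  classical
  -- the functional x ↦ ⟪z, x⟫
  set ψ : F →L[ℂ] ℂ := innerSL ℂ z with hψ
  have hwd : ∀ x x' : F, A x = A x' → ψ x = ψ x' := by
    intro x x' hxx
    have h0 : ‖ψ x - ψ x'‖ ≤ c * ‖A x - A x'‖ := by
      have := hc (x - x')
      simpa [hψ, inner_sub_right, map_sub] using this
    rw [hxx] at h0
    have h1 : ‖ψ x - ψ x'‖ ≤ 0 := by simpa using h0
    have := le_antisymm h1 (norm_nonneg _)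
    rwa [norm_eq_zero, sub_eq_zero] at this
  set p : Submodule ℂ H := LinearMap.range (A : F →ₗ[ℂ] H) with hp
  -- the functional on range A
  have hex : ∀ y : p, ∃ x : F, A x = (y : H) := fun y => y.2
  set xf : p → F := fun y => (hex y).choose with hxf
  have hxfA : ∀ y : p, A (xf y) = (y : H) := fun y => (hex y).choose_spec
  have hwd' : ∀ (y : p) (x : F), A x = (y : H) → ψ (xf y) = ψ x := by
    intro y x hx; exact hwd _ _ (by rw [hxfA y, hx])
  set f₀ : p →ₗ[ℂ] ℂ :=
    { toFun := fun y => ψ (xf y)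
      map_add' := by
        intro y y'
        show ψ (xf (y + y')) = ψ (xf y) + ψ (xf y')
        rw [hwd' (y + y') (xf y + xf y') (by rw [map_add, hxfA, hxfA]; rfl)]
        simp
      map_smul' := by
        intro a y
        show ψ (xf (a • y)) = a • ψ (xf y)
        rw [hwd' (a • y) (a • xf y) (by rw [map_smul, hxfA]; rfl)]
        simp } with hf₀
  have hbound : ∀ y : p, ‖f₀ y‖ ≤ c * ‖y‖ := by
    intro y
    have := hc (xf y)
    rw [hxfA y] at this
    simpa [hf₀, hψ] using this
  set f : p →L[ℂ] ℂ := LinearMap.mkContinuous f₀ c hbound with hf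
  set M : Submodule ℂ H := p.topologicalClosure with hM
  haveI : CompleteSpace M := p.isClosed_topologicalClosure.completeSpace_coe
  -- inclusion as a linear isometry
  set ei : p →ₗᵢ[ℂ] M :=
    ⟨Submodule.inclusion p.le_topologicalClosure, fun x => rfl⟩ with hei
  set e : p →L[ℂ] M := ei.toContinuousLinearMap with he
  have h_unif : IsUniformInducing e := ei.isometry.isUniformInducing
  have h_dense : DenseRange e := by
    intro m
    rw [closure_subtype]
    have h1 : ((↑) : M → H) '' Set.range e = (p : Set H) := by
      ext v
      constructor
      · rintro ⟨w, ⟨u, rfl⟩, rfl⟩; exact u.2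
      · intro hv; exact ⟨e ⟨v, hv⟩, ⟨⟨v, hv⟩, rfl⟩, rfl⟩
    rw [h1]
    have := m.2
    rwa [hM, ← Submodule.topologicalClosure_coe] at *
  set g : M →L[ℂ] ℂ := f.extend e with hg
  set h' : M := (InnerProductSpace.toDual ℂ M).symm g with hh'
  refine ⟨(h' : H), ?_⟩
  apply ext_inner_right ℂ
  intro x
  rw [ContinuousLinearMap.coe_coe, ContinuousLinearMap.adjoint_inner_left]
  have hAx : A x ∈ M := p.le_topologicalClosure ⟨x, rfl⟩
  have key : ⟪(h' : H), A x⟫ = ⟪h', (⟨A x, hAx⟩ : M)⟫ := rfl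
  rw [key, hh', InnerProductSpace.toDual_symm_apply]
  have he' : (⟨A x, hAx⟩ : M) = e ⟨A x, ⟨x, rfl⟩⟩ := rfl
  rw [he', hg, ContinuousLinearMap.extend_eq f h_dense h_unif]
  have : f ⟨A x, ⟨x, rfl⟩⟩ = ψ (xf ⟨A x, ⟨x, rfl⟩⟩) := rfl
  rw [this, hwd' ⟨A x, ⟨x, rfl⟩⟩ x rfl]
  simp [hψ]

/-- From range inclusion, a norm bound. -/
lemma aux_bound_of_range_le {K : Type*}
    [NormedAddCommGroup K] [InnerProductSpace ℂ K] [CompleteSpace K]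
    (A : F →L[ℂ] H) (B : F →L[ℂ] K)
    (hr : LinearMap.range (ContinuousLinearMap.adjoint B : K →ₗ[ℂ] F) ≤
        LinearMap.range (ContinuousLinearMap.adjoint A : H →ₗ[ℂ] F)) :
    ∃ c : ℝ, ∀ x : F, ‖B x‖ ≤ c * ‖A x‖ := by
  classical
  set A' := ContinuousLinearMap.adjoint A with hA'
  set B' := ContinuousLinearMap.adjoint B with hB'
  set N : Submodule ℂ H := (LinearMap.ker (A' : H →ₗ[ℂ] F))ᗮ with hN
  have hkerClosed : IsClosed ((LinearMap.ker (A' : H →ₗ[ℂ] F) : Submodule ℂ H) : Set H) :=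
    ContinuousLinearMap.isClosed_ker A'
  haveI : CompleteSpace (LinearMap.ker (A' : H →ₗ[ℂ] F) : Submodule ℂ H) := hkerClosed.completeSpace_coe
  have horth : Nᗮ = LinearMap.ker (A' : H →ₗ[ℂ] F) := Submodule.orthogonal_orthogonal _
  -- existence of a "pseudo-inverse" value
  have hex : ∀ k : K, ∃ h : H, h ∈ N ∧ A' h = B' k := by
    intro k
    obtain ⟨h₀, hh₀⟩ := hr ⟨k, rfl⟩
    refine ⟨(N.orthogonalProjectionOnto h₀ : H), (N.orthogonalProjectionOnto h₀).2, ?_⟩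
    have hmem : h₀ - (N.orthogonalProjectionOnto h₀ : H) ∈ LinearMap.ker (A' : H →ₗ[ℂ] F) := by
      have : h₀ - (N.orthogonalProjectionOnto h₀ : H) ∈ Nᗮ := Submodule.sub_starProjection_mem_orthogonal (K := N) h₀
      rwa [horth] at this
    have := LinearMap.mem_ker.mp hmem
    rw [map_sub, sub_eq_zero] at this
    simp only [ContinuousLinearMap.coe_coe] at this hh₀
    rw [← this, hh₀]
  have huniq : ∀ h₁ h₂ : H, h₁ ∈ N → h₂ ∈ N → A' h₁ = A' h₂ → h₁ = h₂ := by
    intro h₁ h₂ hm₁ hm₂ heq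
    have hk : h₁ - h₂ ∈ LinearMap.ker (A' : H →ₗ[ℂ] F) := by
      rw [LinearMap.mem_ker, map_sub, sub_eq_zero]; exact heq
    have hn : h₁ - h₂ ∈ N := N.sub_mem hm₁ hm₂
    have h0 : (inner ℂ (h₁ - h₂) (h₁ - h₂) : ℂ) = 0 :=
      (Submodule.mem_orthogonal _ _).mp hn (h₁ - h₂) hk
    rw [inner_self_eq_zero, sub_eq_zero] at h0
    exact h0
  -- define the linear map C via choice
  set Cf : K → H := fun k => (hex k).choose with hCf
  have hCmem : ∀ k, Cf k ∈ N := fun k => (hex k).choose_spec.1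
  have hCA : ∀ k, A' (Cf k) = B' k := fun k => (hex k).choose_spec.2
  set Clin : K →ₗ[ℂ] H :=
    { toFun := Cf
      map_add' := by
        intro k k'
        refine huniq _ _ (hCmem _) (N.add_mem (hCmem k) (hCmem k')) ?_
        rw [map_add, hCA, hCA, hCA, map_add]
      map_smul' := by
        intro a k
        refine huniq _ _ (hCmem _) (N.smul_mem a (hCmem k)) ?_
        rw [map_smul, hCA, hCA, map_smul]
        rfl } with hClin
  have hNclosed : IsClosed (N : Set H) := Submodule.isClosed_orthogonal _
  have hcont : Continuous Clin := by
    apply LinearMap.continuous_of_seq_closed_graph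
    intro u x y hu huy
    have hyN : y ∈ N :=
      hNclosed.mem_of_tendsto huy (Filter.Eventually.of_forall fun n => hCmem (u n))
    have h1 : Filter.Tendsto (fun n => A' (Clin (u n))) Filter.atTop (nhds (A' y)) :=
      (A'.continuous.tendsto y).comp huy
    have h2 : (fun n => A' (Clin (u n))) = fun n => B' (u n) := funext fun n => hCA (u n)
    have h3 : Filter.Tendsto (fun n => B' (u n)) Filter.atTop (nhds (B' x)) :=
      (B'.continuous.tendsto x).comp hu
    have h4 : A' y = B' x := tendsto_nhds_unique (h2 ▸ h1) h3
    exact huniq y (Cf x) hyN (hCmem x) (by rw [h4, hCA])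
  set C : K →L[ℂ] H := ⟨Clin, hcont⟩ with hC
  refine ⟨‖C‖, fun x => ?_⟩
  rcases eq_or_lt_of_le (norm_nonneg (B x)) with hBx | hBx
  · rw [← hBx]
    positivity
  have key : (inner ℂ (B x) (B x) : ℂ) = inner ℂ (Cf (B x)) (A x) := by
    rw [← ContinuousLinearMap.adjoint_inner_left B, ← hB', ← hCA (B x), hA',
      ContinuousLinearMap.adjoint_inner_left]
  have h5 : ‖B x‖ * ‖B x‖ ≤ (‖C‖ * ‖A x‖) * ‖B x‖ := by
    have h6 : ‖(inner ℂ (B x) (B x) : ℂ)‖ = ‖B x‖ * ‖B x‖ := by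
      rw [inner_self_eq_norm_sq_to_K]
      simp [norm_pow, pow_two]
    calc ‖B x‖ * ‖B x‖ = ‖(inner ℂ (B x) (B x) : ℂ)‖ := h6.symm
      _ = ‖(inner ℂ (Cf (B x)) (A x) : ℂ)‖ := by rw [key]
      _ ≤ ‖Cf (B x)‖ * ‖A x‖ := norm_inner_le_norm _ _
      _ ≤ (‖C‖ * ‖B x‖) * ‖A x‖ :=
        mul_le_mul_of_nonneg_right (C.le_opNorm (B x)) (norm_nonneg _)
      _ = (‖C‖ * ‖A x‖) * ‖B x‖ := by ring
  exact le_of_mul_le_mul_right h5 hBx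

end

theorem stmt_12 {F H K : Type*}
    [NormedAddCommGroup F] [InnerProductSpace ℂ F] [CompleteSpace F]
    [NormedAddCommGroup H] [InnerProductSpace ℂ H] [CompleteSpace H]
    [NormedAddCommGroup K] [InnerProductSpace ℂ K] [CompleteSpace K]
    (A : F →L[ℂ] H) (B : F →L[ℂ] K) :
    (∀ x : ℕ → F, Filter.Tendsto (fun n => A (x n)) Filter.atTop (nhds 0) →
        Filter.Tendsto (fun n => B (x n)) Filter.atTop (nhds 0)) ↔
      LinearMap.range (ContinuousLinearMap.adjoint B : K →ₗ[ℂ] F) ≤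
        LinearMap.range (ContinuousLinearMap.adjoint A : H →ₗ[ℂ] F) := by
  constructor
  · intro hi
    -- first get a uniform bound
    have hbd : ∃ c : ℝ, ∀ x : F, ‖B x‖ ≤ c * ‖A x‖ := by
      by_contra hct
      push_neg at hct
      have hn : ∀ n : ℕ, ∃ x : F, (n + 1 : ℝ) * ‖A x‖ < ‖B x‖ := fun n => hct (n + 1)
      choose x hx using hn
      have hBpos : ∀ n, 0 < ‖B (x n)‖ := fun n =>
        lt_of_le_of_lt (by positivity) (hx n)
      set y : ℕ → F := fun n => (‖B (x n)‖)⁻¹ • x n with hy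
      have hAy : ∀ n : ℕ, ‖A (y n)‖ ≤ 1 / (n + 1 : ℝ) := by
        intro n
        have h1 : ‖A (y n)‖ = ‖A (x n)‖ / ‖B (x n)‖ := by
          rw [hy]
          simp [norm_smul, abs_of_pos (hBpos n), div_eq_inv_mul]
        rw [h1, div_le_div_iff₀ (hBpos n) (by positivity)]
        have := (hx n).le
        calc ‖A (x n)‖ * (n + 1 : ℝ) = (n + 1 : ℝ) * ‖A (x n)‖ := by ring
          _ ≤ ‖B (x n)‖ := this
          _ = 1 * ‖B (x n)‖ := (one_mul _).symm
      have hA0 : Filter.Tendsto (fun n => A (y n)) Filter.atTop (nhds 0) := by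
        rw [tendsto_zero_iff_norm_tendsto_zero]
        exact squeeze_zero (fun n => norm_nonneg _) hAy
          tendsto_one_div_add_atTop_nhds_zero_nat
      have hB0 := hi y hA0
      have hBn : Filter.Tendsto (fun n => ‖B (y n)‖) Filter.atTop (nhds 0) :=
        tendsto_zero_iff_norm_tendsto_zero.mp hB0
      have hBone : ∀ n, ‖B (y n)‖ = 1 := by
        intro n
        rw [hy]
        simp [norm_smul, abs_of_pos (hBpos n), inv_mul_cancel₀ (hBpos n).ne']
      have hconst : Filter.Tendsto (fun _ : ℕ => (1 : ℝ)) Filter.atTop (nhds 0) := by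
        have : (fun n : ℕ => ‖B (y n)‖) = fun _ : ℕ => (1 : ℝ) := funext hBone
        rwa [this] at hBn
      have := tendsto_nhds_unique hconst (tendsto_const_nhds (α := ℕ) (x := (1:ℝ)))
      norm_num at this
    obtain ⟨c, hc⟩ := hbd
    rintro z ⟨k, rfl⟩
    apply aux_mem_range_adjoint A _ (c * ‖k‖)
    intro x
    calc ‖(inner ℂ ((ContinuousLinearMap.adjoint B) k) x : ℂ)‖
        = ‖(inner ℂ k (B x) : ℂ)‖ := by rw [ContinuousLinearMap.adjoint_inner_left]
      _ ≤ ‖k‖ * ‖B x‖ := norm_inner_le_norm _ _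
      _ ≤ ‖k‖ * (c * ‖A x‖) := by
          apply mul_le_mul_of_nonneg_left (hc x) (norm_nonneg _)
      _ = c * ‖k‖ * ‖A x‖ := by ring
  · intro hr x hx
    obtain ⟨c, hc⟩ := aux_bound_of_range_le A B hr
    rw [tendsto_zero_iff_norm_tendsto_zero]
    apply squeeze_zero (fun n => norm_nonneg _) (fun n => hc (x n))
    have := (tendsto_zero_iff_norm_tendsto_zero.mp hx).const_mul c
    simpa using this
end

section
/- Let F, H, K be complex Hilbert spaces and A : F → H, B : F → K bounded linear operators. The following are equivalent: (i) for every sequence (x_n) in F and every x ∈ K, if A x_n → 0 and B x_n → x then x = 0; (ii) the preimage (B*)⁻¹(range(A*)) is dense in K. -/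
open ContinuousLinearMap Filter

set_option synthInstance.maxHeartbeats 1000000 in
theorem stmt_13 {F H K : Type*}
    [NormedAddCommGroup F] [InnerProductSpace ℂ F] [CompleteSpace F]
    [NormedAddCommGroup H] [InnerProductSpace ℂ H] [CompleteSpace H]
    [NormedAddCommGroup K] [InnerProductSpace ℂ K] [CompleteSpace K]
    (A : F →L[ℂ] H) (B : F →L[ℂ] K) :
    (∀ (x : ℕ → F) (y : K), Filter.Tendsto (fun n => A (x n)) Filter.atTop (nhds 0) →
        Filter.Tendsto (fun n => B (x n)) Filter.atTop (nhds y) → y = 0) ↔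
      Dense {k : K |
        ContinuousLinearMap.adjoint B k ∈ LinearMap.range (ContinuousLinearMap.adjoint A).toLinearMap} := by
  classical
  set S : Submodule ℂ K :=
    (LinearMap.range (ContinuousLinearMap.adjoint A).toLinearMap).comap
      (ContinuousLinearMap.adjoint B : K →ₗ[ℂ] F) with hS
  have hset : {k : K |
      ContinuousLinearMap.adjoint B k ∈ LinearMap.range (ContinuousLinearMap.adjoint A).toLinearMap}
      = (S : Set K) := rfl
  rw [hset, Submodule.dense_iff_topologicalClosure_eq_top,
    Submodule.topologicalClosure_eq_top_iff]
  -- the graph submodule in the L² product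
  set T : F →ₗ[ℂ] WithLp 2 (H × K) :=
    ((WithLp.linearEquiv 2 ℂ (H × K)).symm.toLinearMap).comp
      ((A : F →ₗ[ℂ] H).prod (B : F →ₗ[ℂ] K)) with hT
  have hTfst : ∀ x : F, (T x).fst = A x := fun x => rfl
  have hTsnd : ∀ x : F, (T x).snd = B x := fun x => rfl
  set G : Submodule ℂ (WithLp 2 (H × K)) := LinearMap.range T with hG
  -- characterize Gᗮ
  have hGorth : ∀ z : WithLp 2 (H × K), z ∈ Gᗮ ↔
      ContinuousLinearMap.adjoint A z.fst + ContinuousLinearMap.adjoint B z.snd = 0 := by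
    intro z
    rw [Submodule.mem_orthogonal]
    constructor
    · intro h
      have h2 : ∀ x : F, (inner (𝕜 := ℂ) x
          (ContinuousLinearMap.adjoint A z.fst + ContinuousLinearMap.adjoint B z.snd)) = 0 := by
        intro x
        have := h (T x) ⟨x, rfl⟩
        rw [WithLp.prod_inner_apply, WithLp.ofLp_fst, WithLp.ofLp_snd, hTfst, hTsnd] at this
        rw [inner_add_right, ContinuousLinearMap.adjoint_inner_right,
          ContinuousLinearMap.adjoint_inner_right]
        exact this
      have := h2 (ContinuousLinearMap.adjoint A z.fst + ContinuousLinearMap.adjoint B z.snd)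
      exact inner_self_eq_zero.mp this
    · rintro h u ⟨x, rfl⟩
      rw [WithLp.prod_inner_apply, WithLp.ofLp_fst, WithLp.ofLp_snd, WithLp.ofLp_fst, WithLp.ofLp_snd, hTfst, hTsnd,
        ← ContinuousLinearMap.adjoint_inner_right A,
        ← ContinuousLinearMap.adjoint_inner_right B, ← inner_add_right, h, inner_zero_right]
  constructor
  · -- (i) → Sᗮ = ⊥
    intro hi
    rw [Submodule.eq_bot_iff]
    intro y hy
    rw [Submodule.mem_orthogonal] at hy
    -- z₀ = (0, y) lies in closure of G
    set z₀ : WithLp 2 (H × K) := (WithLp.equiv 2 (H × K)).symm (0, y) with hz₀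
    have hz₀f : z₀.fst = 0 := rfl
    have hz₀s : z₀.snd = y := rfl
    have hmem : z₀ ∈ closure (G : Set (WithLp 2 (H × K))) := by
      have : z₀ ∈ Gᗮᗮ := by
        rw [Submodule.mem_orthogonal]
        intro z hz
        rw [hGorth] at hz
        have hzS : z.snd ∈ S := by
          refine ⟨-z.fst, ?_⟩
          have := hz
          rw [add_eq_zero_iff_eq_neg] at this
          simp [this]
        rw [WithLp.prod_inner_apply, WithLp.ofLp_fst, WithLp.ofLp_snd, WithLp.ofLp_fst, WithLp.ofLp_snd, hz₀f, hz₀s, inner_zero_right, zero_add]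
        exact hy z.snd hzS
      rwa [Submodule.orthogonal_orthogonal_eq_closure] at this
    rw [mem_closure_iff_seq_limit] at hmem
    obtain ⟨u, hu, hlim⟩ := hmem
    choose x hx using hu
    have hlim' : Tendsto (fun n => (WithLp.equiv 2 (H × K)) (u n)) atTop
        (nhds ((WithLp.equiv 2 (H × K)) z₀)) :=
      ((WithLp.prodContinuousLinearEquiv 2 ℂ H K).continuous.tendsto _).comp hlim
    have hA : Tendsto (fun n => A (x n)) atTop (nhds 0) := by
      have := hlim'.fst_nhds
      simpa [hx, ← hTfst, hz₀f] using this
    have hB : Tendsto (fun n => B (x n)) atTop (nhds y) := by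
      have := hlim'.snd_nhds
      simpa [hx, ← hTsnd, hz₀s] using this
    exact hi x y hA hB
  · -- Sᗮ = ⊥ → (i)
    intro hbot x y hA hB
    have hy : y ∈ Sᗮ := by
      rw [Submodule.mem_orthogonal]
      rintro u ⟨f, hf⟩
      have hf' : ContinuousLinearMap.adjoint A f = ContinuousLinearMap.adjoint B u := hf
      have h1 : Tendsto (fun n => (inner (𝕜 := ℂ) u (B (x n)))) atTop
          (nhds (inner (𝕜 := ℂ) u y)) :=
        (continuous_inner.comp (continuous_const.prodMk continuous_id)).continuousAt.tendsto.comp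
          hB |>.congr (fun n => rfl)
      have h2 : Tendsto (fun n => (inner (𝕜 := ℂ) u (B (x n)))) atTop (nhds 0) := by
        have heq : ∀ n, (inner (𝕜 := ℂ) u (B (x n))) = inner (𝕜 := ℂ) f (A (x n)) := by
          intro n
          rw [← ContinuousLinearMap.adjoint_inner_left B, ← hf',
            ContinuousLinearMap.adjoint_inner_left]
        rw [show (0 : ℂ) = inner (𝕜 := ℂ) f (0 : H) by rw [inner_zero_right]]
        refine Tendsto.congr (fun n => (heq n).symm) ?_
        exact ((continuous_inner.comp
          (continuous_const.prodMk continuous_id)).continuousAt.tendsto.comp hA).congr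
          (fun n => rfl)
      exact tendsto_nhds_unique h1 h2
    rw [hbot] at hy
    exact hy
end
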